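/- arXiv:1307.7486 — 14 statements merged into one kernel-verified Lean document; each statement's English description precedes it below -/
import Mathlib

section
/- Let G be a finite simple graph with no isolated vertices whose connected components are G_1, G_2, ..., G_ω. Then max_{1≤i≤ω} χ_d^t(G_i) + 2ω − 2 ≤ χ_d^t(G) ≤ Σ_{i=1}^{ω} χ_d^t(G_i). -/
open SimpleGraph

/-- `f` is a total dominator coloring of `G`: a proper coloring (with colors in `Fin n`)
such that every vertex is adjacent to every vertex of some nonempty color class. -/
def IsTDColoring {V : Type*} (G : SimpleGraph V) {n : ℕ} (f : V → Fin n) : Prop :=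
  (∀ u v : V, G.Adj u v → f u ≠ f v) ∧
  ∀ v : V, ∃ i : Fin n, (∃ u, f u = i) ∧ ∀ u : V, f u = i → G.Adj v u

/-- The total dominator chromatic number `χ_d^t(G)`: the minimum number of color classes
in a total dominator coloring of `G`. -/
noncomputable def tdChromNum {V : Type*} (G : SimpleGraph V) : ℕ :=
  sInf {n : ℕ | ∃ f : V → Fin n, IsTDColoring G f}

/-- `f` is a dominator coloring of `G`: a proper coloring such that every vertex dominates
some nonempty color class (the class is contained in its closed neighborhood). -/
def IsDColoring {V : Type*} (G : SimpleGraph V) {n : ℕ} (f : V → Fin n) : Prop :=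
  (∀ u v : V, G.Adj u v → f u ≠ f v) ∧
  ∀ v : V, ∃ i : Fin n, (∃ u, f u = i) ∧ ∀ u : V, f u = i → u = v ∨ G.Adj v u

/-- The dominator chromatic number `χ_d(G)`. -/
noncomputable def dChromNum {V : Type*} (G : SimpleGraph V) : ℕ :=
  sInf {n : ℕ | ∃ f : V → Fin n, IsDColoring G f}

/-- The total domination number `γ_t(G)`: the minimum size of a set `S` such that every
vertex of `G` has a neighbor in `S`. -/
noncomputable def totalDomNum {V : Type*} (G : SimpleGraph V) : ℕ :=
  sInf {n : ℕ | ∃ S : Finset V, S.card = n ∧ ∀ v : V, ∃ u ∈ S, G.Adj v u}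

lemma mem_supp_adj {V : Type*} {G : SimpleGraph V} {c : G.ConnectedComponent} {v u : V}
    (hv : v ∈ c.supp) (h : G.Adj v u) : u ∈ c.supp := by
  rw [ConnectedComponent.mem_supp_iff] at *
  rw [← hv]
  exact ConnectedComponent.sound h.symm.reachable

lemma td_set_nonempty {V : Type*} [Fintype V] (G : SimpleGraph V)
    (hiso : ∀ v : V, ∃ u : V, G.Adj v u) :
    {n : ℕ | ∃ f : V → Fin n, IsTDColoring G f}.Nonempty := by
  refine ⟨Fintype.card V, Fintype.equivFin V, ?_, ?_⟩
  · intro u v h hne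
    exact h.ne ((Fintype.equivFin V).injective hne)
  · intro v
    obtain ⟨u, hu⟩ := hiso v
    exact ⟨Fintype.equivFin V u, ⟨u, rfl⟩,
      fun w hw => ((Fintype.equivFin V).injective hw) ▸ hu⟩

/-- For a finite graph `G` with no isolated vertices whose connected components are
`G_1, …, G_ω`: `max_i χ_d^t(G_i) + 2ω − 2 ≤ χ_d^t(G) ≤ Σ_i χ_d^t(G_i)`. -/
theorem stmt2 {V : Type*} [Fintype V] (G : SimpleGraph V)
    [Fintype G.ConnectedComponent]
    (hiso : ∀ v : V, ∃ u : V, G.Adj v u) :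
    (Finset.univ.sup fun c : G.ConnectedComponent => tdChromNum (G.induce c.supp)) +
        2 * Fintype.card G.ConnectedComponent - 2 ≤ tdChromNum G ∧
    tdChromNum G ≤ ∑ c : G.ConnectedComponent, tdChromNum (G.induce c.supp) := by
  classical
  haveI : ∀ c : G.ConnectedComponent, Fintype c.supp := fun c => Fintype.ofFinite _
  -- no isolated vertices in induced subgraphs
  have hisoc : ∀ c : G.ConnectedComponent, ∀ v : c.supp,
      ∃ u : c.supp, (G.induce c.supp).Adj v u := by
    intro c v
    obtain ⟨u, hu⟩ := hiso v
    exact ⟨⟨u, mem_supp_adj v.2 hu⟩, hu⟩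
  constructor
  · -- lower bound
    by_cases hV : Nonempty V
    · obtain ⟨f, hf⟩ := Nat.sInf_mem (td_set_nonempty G hiso)
      set n := tdChromNum G with hn
      -- private dominated colors of each component
      set S : G.ConnectedComponent → Finset (Fin n) := fun d =>
        Finset.univ.filter (fun i => (∃ u, f u = i) ∧ ∀ u, f u = i → u ∈ d.supp) with hSdef
      have hS2 : ∀ d, 2 ≤ (S d).card := by
        intro d
        obtain ⟨v, rfl⟩ := d.exists_rep
        obtain ⟨i, ⟨u, hu⟩, hdom⟩ := hf.2 v
        have hisupp : ∀ w, f w = i → w ∈ (G.connectedComponentMk v).supp :=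
          fun w hw => mem_supp_adj (c := G.connectedComponentMk v) rfl (hdom w hw)
        obtain ⟨j, ⟨w, hw⟩, hdom'⟩ := hf.2 u
        have hjsupp : ∀ w', f w' = j → w' ∈ (G.connectedComponentMk v).supp :=
          fun w' hw' => mem_supp_adj (hisupp u hu) (hdom' w' hw')
        have hij : i ≠ j := by
          intro h
          exact G.irrefl (hdom' u (h ▸ hu))
        refine Finset.one_lt_card.mpr ⟨i, ?_, j, ?_, hij⟩
        · simp only [hSdef, Finset.mem_filter, Finset.mem_univ, true_and]
          exact List.mem_filter.mpr ⟨List.mem_finRange _, by simp only [decide_eq_true_eq]; exact ⟨⟨u, hu⟩, hisupp⟩⟩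
        · simp only [hSdef, Finset.mem_filter, Finset.mem_univ, true_and]
          exact List.mem_filter.mpr ⟨List.mem_finRange _, by simp only [decide_eq_true_eq]; exact ⟨⟨w, hw⟩, hjsupp⟩⟩
      have hSdisj : ∀ d d', d ≠ d' → Disjoint (S d) (S d') := by
        intro d d' hne
        rw [Finset.disjoint_left]
        intro i hi hi'
        simp only [hSdef, Finset.mem_filter, Finset.mem_univ, true_and] at hi hi'
        obtain ⟨⟨u, hu⟩, hd⟩ := hi
        have h1 := hd u hu
        have h2 := hi'.2 u hu
        rw [ConnectedComponent.mem_supp_iff] at h1 h2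
        exact hne (h1 ▸ h2)
      -- per-component bound
      have key : ∀ c : G.ConnectedComponent,
          tdChromNum (G.induce c.supp) + 2 * (Fintype.card G.ConnectedComponent - 1) ≤ n := by
        intro c
        set U : Finset (Fin n) :=
          Finset.univ.filter (fun i => ∃ u ∈ c.supp, f u = i) with hUdef
        -- restriction is a TD coloring with U.card colors
        have hres : tdChromNum (G.induce c.supp) ≤ U.card := by
          apply Nat.sInf_le
          refine ⟨fun v => U.equivFin ⟨f v, by
            simp only [hUdef, Finset.mem_filter, Finset.mem_univ, true_and]
            exact List.mem_filter.mpr ⟨List.mem_finRange _, by simp only [decide_eq_true_eq]; exact ⟨v.1, v.2, rfl⟩⟩⟩, ?_, ?_⟩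
          · intro a b hab hne
            apply hf.1 a b hab
            have := U.equivFin.injective hne
            exact congrArg Subtype.val this
          · intro v
            obtain ⟨i, ⟨u, hu⟩, hdom⟩ := hf.2 v
            have hsupp : ∀ w, f w = i → w ∈ c.supp :=
              fun w hw => mem_supp_adj v.2 (hdom w hw)
            have hiU : i ∈ U := by
              simp only [hUdef, Finset.mem_filter, Finset.mem_univ, true_and]
              exact List.mem_filter.mpr ⟨List.mem_finRange _, by simp only [decide_eq_true_eq]; exact ⟨u, hsupp u hu, hu⟩⟩
            refine ⟨U.equivFin ⟨i, hiU⟩, ⟨⟨u, hsupp u hu⟩, ?_⟩, ?_⟩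
            · exact congrArg U.equivFin (Subtype.ext hu)
            · intro w hw
              have := U.equivFin.injective hw
              exact hdom w (congrArg Subtype.val this)
        -- counting
        have hUSdisj : ∀ d ∈ Finset.univ.erase c, Disjoint U (S d) := by
          intro d hd
          rw [Finset.disjoint_left]
          intro i hi hi'
          simp only [hUdef, Finset.mem_filter, Finset.mem_univ, true_and] at hi
          simp only [hSdef, Finset.mem_filter, Finset.mem_univ, true_and] at hi'
          obtain ⟨u, hu, hfu⟩ := hi
          have h2 := hi'.2 u hfu
          rw [ConnectedComponent.mem_supp_iff] at hu h2
          exact (Finset.mem_erase.mp hd).1 (h2 ▸ hu)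
        set T := Finset.univ.erase c with hT
        have hcard : (U ∪ T.biUnion S).card ≤ n := by
          calc (U ∪ T.biUnion S).card ≤ (Finset.univ : Finset (Fin n)).card :=
                Finset.card_le_univ _
            _ = n := by simp
        rw [Finset.card_union_of_disjoint
            ((Finset.disjoint_biUnion_right _ _ _).mpr hUSdisj),
          Finset.card_biUnion (fun x _ y _ hxy => hSdisj x y hxy)] at hcard
        have hsum : T.card * 2 ≤ ∑ d ∈ T, (S d).card := by
          have := Finset.card_nsmul_le_sum T (fun d => (S d).card) 2 (fun d _ => hS2 d)
          simpa using this
        have hTcard : T.card = Fintype.card G.ConnectedComponent - 1 := by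
          rw [hT, Finset.card_erase_of_mem (Finset.mem_univ c), Finset.card_univ]
        omega
      -- conclude
      obtain ⟨v⟩ := hV
      haveI : Nonempty G.ConnectedComponent := ⟨G.connectedComponentMk v⟩
      obtain ⟨c, -, hc⟩ := Finset.exists_mem_eq_sup Finset.univ Finset.univ_nonempty
        (fun c : G.ConnectedComponent => tdChromNum (G.induce c.supp))
      rw [hc]
      have h1 := key c
      have h2 : 1 ≤ Fintype.card G.ConnectedComponent := Fintype.card_pos
      omega
    · -- V empty
      haveI : IsEmpty V := not_nonempty_iff.mp hV
      haveI : IsEmpty G.ConnectedComponent :=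
        ⟨fun c => c.exists_rep.elim fun v _ => IsEmpty.false v⟩
      simp
  · -- upper bound
    have hne : ∀ c : G.ConnectedComponent,
        ∃ f : c.supp → Fin (tdChromNum (G.induce c.supp)),
          IsTDColoring (G.induce c.supp) f :=
      fun c => Nat.sInf_mem (td_set_nonempty (G.induce c.supp) (hisoc c))
    choose F hF using hne
    set N := ∑ c : G.ConnectedComponent, tdChromNum (G.induce c.supp) with hN
    have ecard : Fintype.card (Σ c : G.ConnectedComponent,
        Fin (tdChromNum (G.induce c.supp))) = N := by
      simp [Fintype.card_sigma, hN]
    set e := Fintype.equivFinOfCardEq ecard with he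
    have hmemmk : ∀ v : V, v ∈ (G.connectedComponentMk v).supp := fun v => rfl
    set f : V → Fin N := fun v => e ⟨G.connectedComponentMk v, F _ ⟨v, hmemmk v⟩⟩ with hfdef
    -- key dependent rewriting lemma
    have keyEq : ∀ (c d : G.ConnectedComponent) (h : c = d) (v : V) (hv : v ∈ c.supp),
        (⟨c, F c ⟨v, hv⟩⟩ : Σ c : G.ConnectedComponent, Fin (tdChromNum (G.induce c.supp)))
          = ⟨d, F d ⟨v, h ▸ hv⟩⟩ := by
      rintro c d rfl v hv
      rfl
    apply Nat.sInf_le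
    refine ⟨f, ?_, ?_⟩
    · intro u v huv hne'
      have hcc : G.connectedComponentMk u = G.connectedComponentMk v :=
        ConnectedComponent.sound huv.reachable
      have hs := e.injective hne'
      rw [keyEq _ _ hcc u (hmemmk u)] at hs
      have h2 : F (G.connectedComponentMk v) ⟨u, hcc ▸ hmemmk u⟩
          = F (G.connectedComponentMk v) ⟨v, hmemmk v⟩ := by
        exact eq_of_heq (Sigma.ext_iff.mp hs).2
      exact (hF (G.connectedComponentMk v)).1 ⟨u, hcc ▸ hmemmk u⟩ ⟨v, hmemmk v⟩ huv h2
    · intro v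
      set c := G.connectedComponentMk v with hc
      obtain ⟨i, ⟨⟨u, hu⟩, hfu⟩, hdom⟩ := (hF c).2 ⟨v, hmemmk v⟩
      refine ⟨e ⟨c, i⟩, ⟨u, ?_⟩, ?_⟩
      · have hcu : G.connectedComponentMk u = c := hu
        show e ⟨G.connectedComponentMk u, F _ ⟨u, hmemmk u⟩⟩ = e ⟨c, i⟩
        rw [keyEq _ _ hcu u (hmemmk u)]
        congr 1
        rw [Sigma.ext_iff]
        refine ⟨rfl, heq_of_eq ?_⟩
        rw [← hfu]
      · intro w hw
        have hs := e.injective hw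
        have hcw : G.connectedComponentMk w = c := (Sigma.ext_iff.mp hs).1
        rw [keyEq _ _ hcw w (hmemmk w)] at hs
        have h2 : F c ⟨w, hcw ▸ hmemmk w⟩ = i := eq_of_heq (Sigma.ext_iff.mp hs).2
        exact hdom ⟨w, hcw ▸ hmemmk w⟩ h2
end

section
/- Let G be a finite simple connected graph of order n ≥ 2 (so G has no isolated vertices). Then 2 ≤ χ_d^t(G) ≤ n. Furthermore, χ_d^t(G) = 2 if and only if G is a complete bipartite graph, and χ_d^t(G) = n if and only if G is isomorphic to the complete graph K_n. -/
open SimpleGraph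

section Aux

open SimpleGraph

private lemma exists_adj' {V : Type*} [Fintype V] (G : SimpleGraph V)
    (hconn : G.Connected) (hn : 2 ≤ Fintype.card V) (v : V) : ∃ u, G.Adj v u := by
  obtain ⟨w, hw⟩ := Fintype.exists_ne_of_one_lt_card (by omega) v
  obtain ⟨p⟩ := hconn.preconnected v w
  cases p with
  | nil => exact absurd rfl hw.symm
  | cons h _ => exact ⟨_, h⟩

private lemma exists_triple' {V : Type*} (G : SimpleGraph V) (hconn : G.Connected)
    (hne : G ≠ ⊤) :
    ∃ a c b : V, G.Adj a c ∧ G.Adj c b ∧ a ≠ b ∧ ¬ G.Adj a b := by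
  have hpair : ∃ a b : V, a ≠ b ∧ ¬ G.Adj a b := by
    by_contra h
    push_neg at h
    apply hne
    ext u v
    constructor
    · exact fun h' => h'.ne
    · exact fun h' => h u v h'
  obtain ⟨a, b, hab, hnadj⟩ := hpair
  by_contra h
  push_neg at h
  have key : ∀ u v : V, G.Reachable u v → u = v ∨ G.Adj u v := by
    intro u v huv
    obtain ⟨p⟩ := huv
    induction p with
    | nil => exact Or.inl rfl
    | cons h' p ih =>
      rcases ih with rfl | h''
      · exact Or.inr h'
      · rcases eq_or_ne _ _ with heq | hne'
        · exact Or.inl heq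
        · exact Or.inr (h _ _ _ h' h'' hne')
  rcases key a b (hconn.preconnected a b) with rfl | h'
  · exact hab rfl
  · exact hnadj h'
private lemma good_pair {V : Type*} [Fintype V] (G : SimpleGraph V)
    (hconn : G.Connected) (hn : 2 ≤ Fintype.card V) (hne : G ≠ ⊤) :
    ∃ u v : V, u ≠ v ∧ ¬ G.Adj u v ∧
      ∀ w, (∃ y, G.Adj w y ∧ y ≠ u ∧ y ≠ v) ∨ (G.Adj w u ∧ G.Adj w v) := by
  obtain ⟨a, c, b, hac, hcb, hab, hnab⟩ := exists_triple' G hconn hne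
  have hnba : ¬ G.Adj b a := fun h => hnab h.symm
  have hNb : ∀ {w : V}, (∀ y, G.Adj w y → y = a) → G.Adj w a := by
    intro w hw
    obtain ⟨y, hy⟩ := exists_adj' G hconn hn w
    exact (hw y hy) ▸ hy
  have hNb' : ∀ {w : V}, (∀ y, G.Adj w y → y = b) → G.Adj w b := by
    intro w hw
    obtain ⟨y, hy⟩ := exists_adj' G hconn hn w
    exact (hw y hy) ▸ hy
  have hcw1 : ∀ {w : V}, (∀ y, G.Adj w y → y = a) → c ≠ w := by
    intro w hw h
    exact hab (hw b (by rw [← h]; exact hcb)).symm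
  have hcw2 : ∀ {w : V}, (∀ y, G.Adj w y → y = b) → c ≠ w := by
    intro w hw h
    exact hab (hw a (by rw [← h]; exact hac.symm))
  by_cases h1 : ∃ w, ∀ y, G.Adj w y → y = a
  · obtain ⟨w1, hw1⟩ := h1
    have hw1a : G.Adj w1 a := hNb hw1
    have hw1b : w1 ≠ b := fun h => hnba (h ▸ hw1a)
    have hw1nb : ¬ G.Adj w1 b := fun h => hab (hw1 b h).symm
    by_cases h2 : ∃ w, ∀ y, G.Adj w y → y = b
    · obtain ⟨w2, hw2⟩ := h2
      have hw2b : G.Adj w2 b := hNb' hw2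
      have hw2a : w2 ≠ a := fun h => hnab (h ▸ hw2b)
      have hw12 : w1 ≠ w2 := fun h => hab (hw1 b (by rw [h]; exact hw2b)).symm
      have hnw12 : ¬ G.Adj w1 w2 := fun h => hw2a (hw1 w2 h)
      refine ⟨w1, w2, hw12, hnw12, ?_⟩
      intro x
      by_cases hx1 : x = a
      · exact Or.inl ⟨c, by rw [hx1]; exact hac, fun h => hcw1 hw1 h,
          fun h => hcw2 hw2 h⟩
      by_cases hx2 : x = b
      · exact Or.inl ⟨c, by rw [hx2]; exact hcb.symm, fun h => hcw1 hw1 h,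
          fun h => hcw2 hw2 h⟩
      · obtain ⟨y, hy⟩ := exists_adj' G hconn hn x
        refine Or.inl ⟨y, hy, ?_, ?_⟩
        · intro h; exact hx1 (hw1 x (by rw [← h]; exact hy.symm))
        · intro h; exact hx2 (hw2 x (by rw [← h]; exact hy.symm))
    · -- leaf at a exists, none at b : pair (w1, b)
      refine ⟨w1, b, hw1b, hw1nb, ?_⟩
      intro x
      by_cases hx1 : x = a
      · exact Or.inl ⟨c, by rw [hx1]; exact hac, fun h => hcw1 hw1 h,
          fun h => G.irrefl (h ▸ hcb)⟩
      · by_cases hy : ∃ y, G.Adj x y ∧ y ≠ w1 ∧ y ≠ b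
        · exact Or.inl hy
        · push_neg at hy
          have hxw1 : ¬ G.Adj x w1 := fun h => hx1 (hw1 x h.symm)
          exfalso
          apply h2
          refine ⟨x, fun y hxy => ?_⟩
          rcases eq_or_ne y w1 with rfl | hyw1
          · exact absurd hxy hxw1
          · exact hy y hxy hyw1
  · by_cases h2 : ∃ w, ∀ y, G.Adj w y → y = b
    · obtain ⟨w2, hw2⟩ := h2
      have hw2b : G.Adj w2 b := hNb' hw2
      have hw2a : w2 ≠ a := fun h => hnab (h ▸ hw2b)
      have hw2na : ¬ G.Adj w2 a := fun h => hab (hw2 a h)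
      refine ⟨w2, a, hw2a, hw2na, ?_⟩
      intro x
      by_cases hx1 : x = b
      · exact Or.inl ⟨c, by rw [hx1]; exact hcb.symm, fun h => hcw2 hw2 h,
          fun h => G.irrefl (h ▸ hac.symm)⟩
      · by_cases hy : ∃ y, G.Adj x y ∧ y ≠ w2 ∧ y ≠ a
        · exact Or.inl hy
        · push_neg at hy
          have hxw2 : ¬ G.Adj x w2 := fun h => hx1 (hw2 x h.symm)
          exfalso
          apply h1
          refine ⟨x, fun y hxy => ?_⟩
          rcases eq_or_ne y w2 with rfl | hyw2
          · exact absurd hxy hxw2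
          · exact hy y hxy hyw2
    · -- no leaves : pair (a, b)
      refine ⟨a, b, hab, hnab, ?_⟩
      intro x
      by_cases hy : ∃ y, G.Adj x y ∧ y ≠ a ∧ y ≠ b
      · exact Or.inl hy
      · push_neg at hy
        right
        constructor
        · by_contra hxa
          apply h2
          refine ⟨x, fun y hxy => ?_⟩
          rcases eq_or_ne y a with rfl | hya
          · exact absurd hxy hxa
          · exact hy y hxy hya
        · by_contra hxb
          apply h1
          refine ⟨x, fun y hxy => ?_⟩
          by_contra hya
          rcases eq_or_ne y b with rfl | hyb
          · exact hxb hxy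
          · exact hyb (hy y hxy hya)
private lemma merge_coloring {V : Type*} [Fintype V] (G : SimpleGraph V) (u v : V)
    (huv : u ≠ v) (hnadj : ¬ G.Adj u v)
    (hgood : ∀ w, (∃ y, G.Adj w y ∧ y ≠ u ∧ y ≠ v) ∨ (G.Adj w u ∧ G.Adj w v)) :
    ∃ f : V → Fin (Fintype.card V - 1), IsTDColoring G f := by
  classical
  let s : Finset V := Finset.univ.erase v
  have hcard : Fintype.card s = Fintype.card V - 1 := by
    simp [s, Fintype.card_coe, Finset.card_erase_of_mem]
  let e := Fintype.equivFinOfCardEq hcard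
  let g : V → s := fun x =>
    if h : x = v then ⟨u, by simp [s, huv]⟩ else ⟨x, by simp [s, h]⟩
  have hg : ∀ x, (g x : V) = if x = v then u else x := by
    intro x
    by_cases h : x = v <;> simp [g, h]
  have hinj : ∀ x y, g x = g y → (if x = v then u else x) = (if y = v then u else y) := by
    intro x y h
    rw [← hg, ← hg, h]
  refine ⟨fun x => e (g x), ?_, ?_⟩
  · intro x y hxy hf
    have h := hinj x y (e.injective hf)
    by_cases hx : x = v <;> by_cases hy' : y = v <;> simp [hx, hy'] at h
    · subst hx; subst hy'; exact G.irrefl hxy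
    · subst hx; subst h; exact hnadj hxy.symm
    · subst hy'; subst h; exact hnadj hxy
    · exact G.irrefl (h ▸ hxy)
  · intro w
    rcases hgood w with ⟨y, hy, hyu, hyv⟩ | ⟨h1, h2⟩
    · refine ⟨e (g y), ⟨y, rfl⟩, fun x hx => ?_⟩
      have h := hinj x y (e.injective hx)
      by_cases hx' : x = v <;> simp [hx', hyv] at h
      · exact absurd h.symm hyu
      · exact h ▸ hy
    · refine ⟨e (g u), ⟨u, rfl⟩, fun x hx => ?_⟩
      have h := hinj x u (e.injective hx)
      by_cases hx' : x = v <;> simp [hx', huv] at h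
      · rw [hx']; exact h2
      · exact h ▸ h1

end Aux
/-- For a connected graph `G` of order `n ≥ 2`: `2 ≤ χ_d^t(G) ≤ n`; moreover
`χ_d^t(G) = 2` iff `G` is complete bipartite, and `χ_d^t(G) = n` iff `G ≅ K_n`. -/
theorem stmt3 {V : Type*} [Fintype V] (G : SimpleGraph V)
    (hconn : G.Connected) (hn : 2 ≤ Fintype.card V) :
    2 ≤ tdChromNum G ∧ tdChromNum G ≤ Fintype.card V ∧
    (tdChromNum G = 2 ↔
      ∃ A B : Set V, A.Nonempty ∧ B.Nonempty ∧ A ∪ B = Set.univ ∧ A ∩ B = ∅ ∧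
        ∀ u v : V, G.Adj u v ↔ ((u ∈ A ∧ v ∈ B) ∨ (u ∈ B ∧ v ∈ A))) ∧
    (tdChromNum G = Fintype.card V ↔ G = ⊤) := by
  classical
  have hVne : Nonempty V := Fintype.card_pos_iff.mp (by omega)
  let S : Set ℕ := {n : ℕ | ∃ f : V → Fin n, IsTDColoring G f}
  have hdef : tdChromNum G = sInf S := rfl
  have hcardS : Fintype.card V ∈ S := by
    refine ⟨Fintype.equivFin V, ?_, ?_⟩
    · intro u v h hf
      exact h.ne ((Fintype.equivFin V).injective hf)
    · intro v
      obtain ⟨u, hu⟩ := exists_adj' G hconn hn v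
      exact ⟨_, ⟨u, rfl⟩, fun w hw => ((Fintype.equivFin V).injective hw) ▸ hu⟩
  have hSne : S.Nonempty := ⟨_, hcardS⟩
  have hmem : tdChromNum G ∈ S := hdef ▸ Nat.sInf_mem hSne
  have h2le : ∀ m ∈ S, 2 ≤ m := by
    rintro m ⟨f, hf1, hf2⟩
    obtain ⟨v⟩ := hVne
    obtain ⟨u, hu⟩ := exists_adj' G hconn hn v
    have hne := hf1 v u hu
    by_contra hc
    push_neg at hc
    interval_cases m
    · exact (f v).elim0
    · exact hne (Subsingleton.elim _ _)
  refine ⟨h2le _ hmem, hdef ▸ Nat.sInf_le hcardS, ?_, ?_⟩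
  · constructor
    · intro h
      have h2 : 2 ∈ S := h ▸ hmem
      obtain ⟨f, hf1, hf2⟩ := h2
      have aux : ∀ i j k : Fin 2, i ≠ k → j ≠ k → i = j := by decide
      have aux2 : ∀ j : Fin 2, j = 0 ∨ j = 1 := by decide
      have aux3 : ∀ j k : Fin 2, j ≠ k → (j = 0 ∧ k = 1) ∨ (j = 1 ∧ k = 0) := by decide
      have dom : ∀ v u : V, f u ≠ f v → G.Adj v u := by
        intro v u hne
        obtain ⟨i, -, hadj⟩ := hf2 v
        have hi : i ≠ f v := fun h' => G.irrefl (hadj v h'.symm)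
        exact hadj u (aux (f u) i (f v) hne hi)
      have hex : ∀ j : Fin 2, ∃ u, f u = j := by
        intro j
        obtain ⟨v⟩ := hVne
        rcases eq_or_ne (f v) j with h' | h'
        · exact ⟨v, h'⟩
        · obtain ⟨i, ⟨u0, hu0⟩, hadj⟩ := hf2 v
          have hi : i ≠ f v := fun h'' => G.irrefl (hadj v h''.symm)
          have : i = j := aux i j (f v) hi h'.symm
          exact ⟨u0, this ▸ hu0⟩
      refine ⟨{v | f v = 0}, {v | f v = 1}, hex 0, hex 1, ?_, ?_, ?_⟩
      · ext v
        simpa using aux2 (f v)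
      · ext v
        simp only [Set.mem_inter_iff, Set.mem_setOf_eq, Set.mem_empty_iff_false, iff_false]
        rintro ⟨h0, h1⟩
        exact absurd (h0.symm.trans h1) (by decide)
      · intro u v
        constructor
        · intro hadj
          have := aux3 (f u) (f v) (hf1 u v hadj)
          simpa using this
        · rintro (⟨hu, hv⟩ | ⟨hu, hv⟩)
          · exact (dom v u (by simp only [Set.mem_setOf_eq] at hu hv; rw [hu, hv]; decide)).symm
          · exact (dom v u (by simp only [Set.mem_setOf_eq] at hu hv; rw [hu, hv]; decide)).symm
    · rintro ⟨A, B, ⟨a0, ha0⟩, ⟨b0, hb0⟩, hAB, hABd, hadj⟩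
      have hdisj : ∀ v : V, v ∈ A → v ∉ B := by
        intro v hA hB
        exact Set.eq_empty_iff_forall_notMem.mp hABd v ⟨hA, hB⟩
      have hcover : ∀ v : V, v ∉ A → v ∈ B := by
        intro v hA
        have : v ∈ A ∪ B := hAB ▸ Set.mem_univ v
        rcases this with h | h
        · exact absurd h hA
        · exact h
      have h2 : 2 ∈ S := by
        refine ⟨fun v => if v ∈ A then 0 else 1, ?_, ?_⟩
        · intro u v huv
          rcases (hadj u v).mp huv with ⟨hu, hv⟩ | ⟨hu, hv⟩
          · have hvA : v ∉ A := fun h' => hdisj v h' hv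
            simp [hu, hvA]
          · have huA : u ∉ A := fun h' => hdisj u h' hu
            simp [hv, huA]
        · intro v
          by_cases hv : v ∈ A
          · refine ⟨1, ⟨b0, by simp [hdisj b0]; intro hb; exact absurd hb0 (fun h => hdisj b0 hb h)⟩, ?_⟩
            intro u hu
            have huA : u ∉ A := by
              intro h'
              simp [h'] at hu
            exact (hadj v u).mpr (Or.inl ⟨hv, hcover u huA⟩)
          · refine ⟨0, ⟨a0, by simp [ha0]⟩, ?_⟩
            intro u hu
            have huA : u ∈ A := by
              by_contra h'
              simp [h'] at hu
            exact (hadj v u).mpr (Or.inr ⟨hcover v hv, huA⟩)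
      exact le_antisymm (hdef ▸ Nat.sInf_le h2) (h2le _ hmem)
  · constructor
    · intro h
      by_contra hne
      obtain ⟨u, v, huv, hnadj, hgood⟩ := good_pair G hconn hn hne
      obtain ⟨f, hf⟩ := merge_coloring G u v huv hnadj hgood
      have hm : Fintype.card V - 1 ∈ S := ⟨f, hf⟩
      have := hdef ▸ Nat.sInf_le hm
      omega
    · intro h
      have hge : ∀ m ∈ S, Fintype.card V ≤ m := by
        rintro m ⟨f, hf1, -⟩
        have hfi : Function.Injective f := by
          intro x y hxy
          by_contra hne
          exact hf1 x y (by rw [h]; exact hne) hxy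
        simpa using Fintype.card_le_of_injective f hfi
      exact le_antisymm (hdef ▸ Nat.sInf_le hcardS) (hge _ hmem)
end

section
/- Let G be a finite simple connected graph of order n ≥ 2, and let S be a nonempty independent set of vertices of G such that every vertex of V(G)∖S that is isolated in the induced subgraph G[V(G)∖S] is adjacent in G to all vertices of S. Then χ_d^t(G) ≤ n + 1 − |S|. -/
open SimpleGraph

/-- If `S` is a nonempty independent set of a connected graph `G` of order `n ≥ 2` such that
every vertex isolated in `G[V∖S]` is adjacent to all vertices of `S`, then
`χ_d^t(G) ≤ n + 1 − |S|`. -/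
theorem stmt4 {V : Type*} [Fintype V] (G : SimpleGraph V)
    (hconn : G.Connected) (hn : 2 ≤ Fintype.card V)
    (S : Finset V) (hS : S.Nonempty)
    (hindep : ∀ u ∈ S, ∀ v ∈ S, ¬ G.Adj u v)
    (hiso : ∀ v : V, v ∉ S → (∀ u : V, u ∉ S → ¬ G.Adj v u) → ∀ u ∈ S, G.Adj v u) :
    tdChromNum G ≤ Fintype.card V + 1 - S.card := by
  classical
  have hnbr : ∀ v : V, ∃ u, G.Adj v u := by
    intro v
    obtain ⟨w, hw⟩ := Fintype.exists_ne_of_one_lt_card (by omega) v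
    obtain ⟨p⟩ := hconn v w
    exact ⟨p.getVert 1, SimpleGraph.Walk.adj_snd (SimpleGraph.Walk.not_nil_of_ne hw.symm)⟩
  set T : Finset V := Sᶜ with hT
  set m : ℕ := T.card with hm
  have e := T.equivFin
  set f : V → Fin (m + 1) := fun v =>
    if h : v ∈ T then (e ⟨v, h⟩).succ else 0 with hf
  have hfS : ∀ v, v ∈ S → f v = 0 := by
    intro v hv; simp [hf, hT, hv]
  have hfT : ∀ v (h : v ∈ T), f v = (e ⟨v, h⟩).succ := by
    intro v h; simp [hf, h]
  have hf0 : ∀ v, f v = 0 → v ∈ S := by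
    intro v hv
    by_contra h
    have h' : v ∈ T := by simp [hT, h]
    rw [hfT v h'] at hv
    exact Fin.succ_ne_zero _ hv
  have hinj : ∀ u v : V, u ∈ T → f u = f v → u = v := by
    intro u v hu huv
    have hv : v ∈ T := by
      by_contra h
      have : v ∈ S := by simpa [hT] using h
      rw [hfT u hu, hfS v this] at huv
      exact Fin.succ_ne_zero _ huv
    rw [hfT u hu, hfT v hv] at huv
    have := e.injective (Fin.succ_injective _ huv)
    exact Subtype.ext_iff.mp this
  have hmem : (m + 1) ∈ {n : ℕ | ∃ f : V → Fin n, IsTDColoring G f} := by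
    refine ⟨f, ?_, ?_⟩
    · intro u v hadj huv
      by_cases hu : u ∈ T
      · exact G.ne_of_adj hadj (hinj u v hu huv)
      · have hu' : u ∈ S := by simpa [hT] using hu
        have hv' : v ∈ S := hf0 v (by rw [← huv]; exact hfS u hu')
        exact hindep u hu' v hv' hadj
    · intro v
      by_cases hcase : ∃ u, u ∉ S ∧ G.Adj v u
      · obtain ⟨u, hu, hadj⟩ := hcase
        have hu' : u ∈ T := by simp [hT, hu]
        refine ⟨f u, ⟨u, rfl⟩, fun w hw => ?_⟩
        have := hinj u w hu' hw.symm
        rwa [← this]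
      · push_neg at hcase
        have hvall : ∀ u ∈ S, G.Adj v u := by
          by_cases hv : v ∈ S
          · intro u hu
            exfalso
            obtain ⟨w, hw⟩ := hnbr v
            by_cases hwS : w ∈ S
            · exact hindep v hv w hwS hw
            · exact hcase w hwS hw
          · exact hiso v hv (fun u hu hadj => hcase u hu hadj)
        obtain ⟨s, hs⟩ := hS
        refine ⟨0, ⟨s, hfS s hs⟩, fun w hw => hvall w (hf0 w hw)⟩
  have hle : tdChromNum G ≤ m + 1 := Nat.sInf_le hmem
  have hcard : m = Fintype.card V - S.card := by
    rw [hm, hT, Finset.card_compl]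
  have hSle : S.card ≤ Fintype.card V := S.card_le_univ
  omega
end

section
/- Let G be a finite simple connected k-regular graph of order n ≥ 2 whose independence number α(G) equals k. Then χ_d^t(G) ≤ n + 1 − α(G). -/
open SimpleGraph

/-- The independence number of a graph: the maximum size of a set of pairwise
non-adjacent vertices. -/
noncomputable def indepNum {V : Type*} (G : SimpleGraph V) : ℕ :=
  sSup {n : ℕ | ∃ s : Finset V, s.card = n ∧ ∀ u ∈ s, ∀ v ∈ s, ¬ G.Adj u v}

/-- If `G` is a connected `k`-regular graph of order `n ≥ 2` with `α(G) = k`, then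
`χ_d^t(G) ≤ n + 1 − α(G)`. -/
theorem stmt5 {V : Type*} [Fintype V] (G : SimpleGraph V) [DecidableRel G.Adj]
    (hconn : G.Connected) (hn : 2 ≤ Fintype.card V)
    (k : ℕ) (hreg : G.IsRegularOfDegree k) (hα : _root_.indepNum G = k) :
    tdChromNum G ≤ Fintype.card V + 1 - _root_.indepNum G := by
  classical
  -- extract a maximum independent set
  have hset : _root_.indepNum G ∈ {m : ℕ | ∃ s : Finset V, s.card = m ∧
      ∀ u ∈ s, ∀ v ∈ s, ¬ G.Adj u v} := by
    apply Nat.sSup_mem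
    · exact ⟨0, ∅, by simp⟩
    · exact ⟨Fintype.card V, fun m ⟨s, hs, _⟩ => hs ▸ s.card_le_univ⟩
  obtain ⟨s, hcard, hind⟩ := hset
  rw [hα] at hcard
  obtain ⟨v0⟩ : Nonempty V := Fintype.card_pos_iff.mp (by omega)
  obtain ⟨w0, hw0⟩ := Fintype.exists_ne_of_one_lt_card (by omega) v0
  have hk1 : 1 ≤ k := by
    obtain ⟨p⟩ := hconn.preconnected w0 v0
    have hadj : G.Adj w0 (p.getVert 1) := p.adj_snd (Walk.not_nil_of_ne hw0)
    have h1 : 0 < G.degree w0 := (G.degree_pos_iff_exists_adj w0).mpr ⟨_, hadj⟩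
    have h2 := hreg w0
    omega
  have hkn : k < Fintype.card V := by
    have h1 := G.degree_lt_card_verts v0
    have h2 := hreg v0
    omega
  set m := (sᶜ : Finset V).card with hm
  have hmval : m = Fintype.card V - k := by
    rw [hm, Finset.card_compl, hcard]
  let e : (sᶜ : Finset V) ≃ Fin m := (sᶜ : Finset V).equivFin
  let f : V → Fin (m + 1) := fun v =>
    if h : v ∈ (sᶜ : Finset V) then (e ⟨v, h⟩).castSucc else Fin.last m
  have hf_mem : ∀ v (h : v ∈ (sᶜ : Finset V)), f v = (e ⟨v, h⟩).castSucc := by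
    intro v h; simp only [f, dif_pos h]
  have hf_not : ∀ v, v ∈ s → f v = Fin.last m := by
    intro v h
    simp only [f, dif_neg (by simp [h] : ¬ v ∈ (sᶜ : Finset V))]
  have hlast_iff : ∀ v, f v = Fin.last m ↔ v ∈ s := by
    intro v
    constructor
    · intro h
      by_contra hv
      have hv' : v ∈ (sᶜ : Finset V) := Finset.mem_compl.mpr hv
      rw [hf_mem v hv'] at h
      exact (Fin.castSucc_lt_last _).ne h
    · exact hf_not v
  have hTD : IsTDColoring G f := by
    constructor
    · intro u v hadj heq
      by_cases hu : u ∈ (sᶜ : Finset V) <;> by_cases hv : v ∈ (sᶜ : Finset V)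
      · rw [hf_mem u hu, hf_mem v hv] at heq
        have : (⟨u, hu⟩ : (sᶜ : Finset V)) = ⟨v, hv⟩ :=
          e.injective (Fin.castSucc_injective _ heq)
        exact hadj.ne (by simpa using congrArg Subtype.val this)
      · rw [hf_mem u hu, hf_not v (by simpa using hv)] at heq
        exact (Fin.castSucc_lt_last _).ne heq
      · rw [hf_not u (by simpa using hu), hf_mem v hv] at heq
        exact (Fin.castSucc_lt_last _).ne heq.symm
      · exact hind u (by simpa using hu) v (by simpa using hv) hadj
    · intro v
      by_cases hcase : ∃ u, G.Adj v u ∧ u ∉ s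
      · obtain ⟨u, hadj, hus⟩ := hcase
        have hu : u ∈ (sᶜ : Finset V) := Finset.mem_compl.mpr hus
        refine ⟨(e ⟨u, hu⟩).castSucc, ⟨u, hf_mem u hu⟩, ?_⟩
        intro w hw
        by_cases hwc : w ∈ (sᶜ : Finset V)
        · rw [hf_mem w hwc] at hw
          have : (⟨w, hwc⟩ : (sᶜ : Finset V)) = ⟨u, hu⟩ :=
            e.injective (Fin.castSucc_injective _ hw)
          have : w = u := by simpa using congrArg Subtype.val this
          rwa [this]
        · rw [hf_not w (by simpa using hwc)] at hw
          exact absurd hw.symm (Fin.castSucc_lt_last _).ne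
      · push_neg at hcase
        have hsub : G.neighborFinset v ⊆ s := by
          intro u hu
          exact hcase u ((G.mem_neighborFinset v u).mp hu)
        have hEq : G.neighborFinset v = s := by
          apply Finset.eq_of_subset_of_card_le hsub
          rw [hcard, G.card_neighborFinset_eq_degree, hreg v]
        obtain ⟨u0, hu0⟩ : s.Nonempty := Finset.card_pos.mp (by omega)
        refine ⟨Fin.last m, ⟨u0, hf_not u0 hu0⟩, ?_⟩
        intro w hw
        have hws : w ∈ s := (hlast_iff w).mp hw
        have : w ∈ G.neighborFinset v := hEq ▸ hws
        exact (G.mem_neighborFinset v w).mp this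
  have hle : tdChromNum G ≤ m + 1 := Nat.sInf_le ⟨f, hTD⟩
  rw [hα]
  omega
end

section
/- Let G be a finite simple connected graph of order at least 2 (so without isolated vertices). Then χ_d^t(G) ≤ γ_t(G) + min_S χ(G[V(G)−S]), where the minimum is taken over all minimum total dominating sets S of G and χ denotes the chromatic number of the induced subgraph on V(G)∖S. -/
open SimpleGraph

lemma main_lemma {V : Type*} (G : SimpleGraph V) (S : Finset V)
    (hdom : ∀ v : V, ∃ u ∈ S, G.Adj v u) {k : ℕ}
    (C : (G.induce ((S : Set V)ᶜ)).Coloring (Fin k)) :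
    ∃ f : V → Fin (S.card + k), IsTDColoring G f := by
  classical
  set m := S.card
  let e : {x // x ∈ S} ≃ Fin m := S.equivFin
  refine ⟨fun v => if h : v ∈ S then Fin.castAdd k (e ⟨v, h⟩)
    else Fin.natAdd m (C ⟨v, by simpa using h⟩), ?_, ?_⟩
  · intro u v huv
    by_cases hu : u ∈ S <;> by_cases hv : v ∈ S <;> simp only [hu, hv, dif_pos, dif_neg,
      not_false_iff]
    · intro h
      have : (⟨u, hu⟩ : {x // x ∈ S}) = ⟨v, hv⟩ :=
        e.injective (Fin.val_injective (by simpa [Fin.ext_iff] using h))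
      exact G.ne_of_adj huv (by simpa using this)
    · intro h
      have := congrArg Fin.val h
      simp [Fin.castAdd, Fin.natAdd] at this
      omega
    · intro h
      have := congrArg Fin.val h
      simp [Fin.castAdd, Fin.natAdd] at this
      omega
    · intro h
      have hadj : (G.induce ((S : Set V)ᶜ)).Adj ⟨u, by simpa using hu⟩ ⟨v, by simpa using hv⟩ := by
        simpa using huv
      have := C.valid hadj
      exact this (by simpa [Fin.ext_iff] using congrArg Fin.val h)
  · intro v
    obtain ⟨u, hu, hadj⟩ := hdom v
    refine ⟨Fin.castAdd k (e ⟨u, hu⟩), ⟨u, by simp [hu]⟩, ?_⟩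
    intro w hw
    by_cases hwS : w ∈ S
    · simp only [hwS, dif_pos] at hw
      have : (⟨w, hwS⟩ : {x // x ∈ S}) = ⟨u, hu⟩ :=
        e.injective (Fin.val_injective (by simpa [Fin.ext_iff] using hw))
      have : w = u := by simpa using this
      rw [this]; exact hadj
    · simp only [hwS, dif_neg, not_false_iff] at hw
      have := congrArg Fin.val hw
      simp [Fin.castAdd, Fin.natAdd] at this
      have : m + (C ⟨w, by simpa using hwS⟩ : Fin k).val < m := by omega
      omega

/-- For a connected graph `G` of order at least 2,
`χ_d^t(G) ≤ γ_t(G) + min_S χ(G[V∖S])`, the minimum being over all minimum total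
dominating sets `S` of `G`. -/
theorem stmt6 {V : Type*} [Fintype V] (G : SimpleGraph V)
    (hconn : G.Connected) (hn : 2 ≤ Fintype.card V) :
    (tdChromNum G : ℕ∞) ≤ (totalDomNum G : ℕ∞) +
      sInf {c : ℕ∞ | ∃ S : Finset V, S.card = totalDomNum G ∧
        (∀ v : V, ∃ u ∈ S, G.Adj v u) ∧
        c = (G.induce ((S : Set V)ᶜ)).chromaticNumber} := by
  classical
  -- every vertex has a neighbor
  have hnbr : ∀ v : V, ∃ u, G.Adj v u := by
    intro v
    have : Nontrivial V := Fintype.one_lt_card_iff_nontrivial.mp (by omega)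
    obtain ⟨w, hw⟩ := exists_ne v
    obtain ⟨p⟩ := hconn.preconnected v w
    cases p with
    | nil => exact absurd rfl hw.symm
    | cons h q => exact ⟨_, h⟩
  have hne : {n : ℕ | ∃ S : Finset V, S.card = n ∧ ∀ v : V, ∃ u ∈ S, G.Adj v u}.Nonempty := by
    refine ⟨(Finset.univ : Finset V).card, Finset.univ, rfl, fun v => ?_⟩
    obtain ⟨u, hu⟩ := hnbr v
    exact ⟨u, Finset.mem_univ u, hu⟩
  have hmem := Nat.sInf_mem hne
  obtain ⟨S₀, hS₀card, hS₀dom⟩ := hmem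
  set T : Set ℕ∞ := {c : ℕ∞ | ∃ S : Finset V, S.card = totalDomNum G ∧
        (∀ v : V, ∃ u ∈ S, G.Adj v u) ∧
        c = (G.induce ((S : Set V)ᶜ)).chromaticNumber} with hT
  have hTne : T.Nonempty := ⟨_, S₀, hS₀card, hS₀dom, rfl⟩
  have hTfin : T.Finite := by
    apply Set.Finite.subset (Set.finite_range
      (fun S : Finset V => (G.induce ((S : Set V)ᶜ)).chromaticNumber))
    rintro c ⟨S, _, _, rfl⟩
    exact ⟨S, rfl⟩
  have hinf := hTne.csInf_mem hTfin
  obtain ⟨S, hScard, hSdom, hc⟩ := hinf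
  -- chromatic number is finite
  have hfin : Finite ((S : Set V)ᶜ : Set V) := Subtype.finite
  set k : ℕ := ENat.toNat (G.induce ((S : Set V)ᶜ)).chromaticNumber with hk
  have hcol : (G.induce ((S : Set V)ᶜ)).Colorable k :=
    (G.induce ((S : Set V)ᶜ)).colorable_chromaticNumber_of_fintype
  have hntop : (G.induce ((S : Set V)ᶜ)).chromaticNumber ≠ ⊤ := by
    intro h
    have := hcol.chromaticNumber_le
    rw [h, top_le_iff] at this
    exact (ENat.coe_ne_top k) this
  have hkeq : ((k : ℕ∞)) = (G.induce ((S : Set V)ᶜ)).chromaticNumber := by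
    rw [hk]; exact ENat.coe_toNat hntop
  obtain ⟨f, hf⟩ := main_lemma G S hSdom hcol.some
  have htd : tdChromNum G ≤ S.card + k := Nat.sInf_le ⟨f, hf⟩
  calc (tdChromNum G : ℕ∞) ≤ ((S.card + k : ℕ) : ℕ∞) := by exact_mod_cast htd
    _ = (totalDomNum G : ℕ∞) + sInf T := by
        rw [hScard]; push_cast; rw [hkeq, ← hc]
end

section
/- Let G be a finite simple connected graph of order at least 2 (so without isolated vertices) whose vertex set can be partitioned into p independent sets (i.e., G is p-partite). Then χ_d^t(G) ≤ γ_t(G) + p. -/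
open SimpleGraph

/-- If `G` is a connected `p`-partite graph of order at least 2, then
`χ_d^t(G) ≤ γ_t(G) + p`. -/
theorem stmt7 {V : Type*} [Fintype V] (G : SimpleGraph V)
    (hconn : G.Connected) (hn : 2 ≤ Fintype.card V)
    (p : ℕ) (hpartite : ∃ f : V → Fin p, ∀ u v : V, G.Adj u v → f u ≠ f v) :
    tdChromNum G ≤ totalDomNum G + p := by
  classical
  obtain ⟨f, hf⟩ := hpartite
  have hadj : ∀ v : V, ∃ u, G.Adj v u := by
    intro v
    obtain ⟨w, hw⟩ := Fintype.exists_ne_of_one_lt_card (by omega) v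
    obtain ⟨q⟩ := hconn v w
    cases q with
    | nil => exact absurd rfl hw
    | cons h q' => exact ⟨_, h⟩
  have hne : ({n : ℕ | ∃ S : Finset V, S.card = n ∧ ∀ v : V, ∃ u ∈ S, G.Adj v u}).Nonempty :=
    ⟨Finset.univ.card, Finset.univ, rfl, fun v =>
      (hadj v).imp fun u hu => ⟨Finset.mem_univ u, hu⟩⟩
  obtain ⟨S, hScard, hSdom⟩ := Nat.sInf_mem hne
  have hScard' : S.card = totalDomNum G := hScard
  set k := totalDomNum G with hk
  let e : {x // x ∈ S} ≃ Fin k := S.equivFin.trans (finCongr hScard')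
  let g : V → Fin (k + p) := fun v =>
    if h : v ∈ S then Fin.castAdd p (e ⟨v, h⟩) else Fin.natAdd k (f v)
  have hmem2 : k + p ∈ {n : ℕ | ∃ f : V → Fin n, IsTDColoring G f} := by
    refine ⟨g, ?_, ?_⟩
    · intro u v huv heq
      have huvne : u ≠ v := G.ne_of_adj huv
      by_cases hu : u ∈ S <;> by_cases hv : v ∈ S
      · have h1 : Fin.castAdd p (e ⟨u, hu⟩) = Fin.castAdd p (e ⟨v, hv⟩) := by
          simpa [g, hu, hv] using heq
        have h2 : e ⟨u, hu⟩ = e ⟨v, hv⟩ := by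
          exact Fin.ext (by simpa using congrArg Fin.val h1)
        have := e.injective h2
        exact huvne (congrArg Subtype.val this)
      · have h1 : (Fin.castAdd p (e ⟨u, hu⟩)).val = (Fin.natAdd k (f v)).val := by
          rw [show Fin.castAdd p (e ⟨u, hu⟩) = g u by simp [g, hu],
            show Fin.natAdd k (f v) = g v by simp [g, hv], heq]
        simp only [Fin.coe_castAdd, Fin.coe_natAdd] at h1
        have := (e ⟨u, hu⟩).is_lt
        omega
      · have h1 : (Fin.natAdd k (f u)).val = (Fin.castAdd p (e ⟨v, hv⟩)).val := by
          rw [show Fin.natAdd k (f u) = g u by simp [g, hu],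
            show Fin.castAdd p (e ⟨v, hv⟩) = g v by simp [g, hv], heq]
        simp only [Fin.coe_castAdd, Fin.coe_natAdd] at h1
        have := (e ⟨v, hv⟩).is_lt
        omega
      · have h1 : Fin.natAdd k (f u) = Fin.natAdd k (f v) := by
          simpa [g, hu, hv] using heq
        have h2 : f u = f v := by
          apply Fin.ext
          have := congrArg Fin.val h1
          simp only [Fin.coe_natAdd] at this
          omega
        exact hf u v huv h2
    · intro v
      obtain ⟨u, hu, hadjvu⟩ := hSdom v
      refine ⟨g u, ⟨u, rfl⟩, ?_⟩
      intro w hw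
      by_cases hwS : w ∈ S
      · have h1 : Fin.castAdd p (e ⟨w, hwS⟩) = Fin.castAdd p (e ⟨u, hu⟩) := by
          simpa [g, hwS, hu] using hw
        have h2 : e ⟨w, hwS⟩ = e ⟨u, hu⟩ := by
          exact Fin.ext (by simpa using congrArg Fin.val h1)
        have h3 : w = u := congrArg Subtype.val (e.injective h2)
        rw [h3]; exact hadjvu
      · exfalso
        have h1 : (Fin.natAdd k (f w)).val = (Fin.castAdd p (e ⟨u, hu⟩)).val := by
          rw [show Fin.natAdd k (f w) = g w by simp [g, hwS],
            show Fin.castAdd p (e ⟨u, hu⟩) = g u by simp [g, hu], hw]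
        simp only [Fin.coe_castAdd, Fin.coe_natAdd] at h1
        have := (e ⟨u, hu⟩).is_lt
        omega
  exact Nat.sInf_le hmem2
end

section
/- Let G be a finite simple connected graph of order n ≥ 2 whose vertex set is partitioned into p independent sets of cardinalities n_1, n_2, ..., n_p, and suppose δ(G) ≥ n_i for some i. Then χ_d^t(G) ≤ n − n' + 1, where n' = max{n_i : δ(G) ≥ n_i} and δ(G) denotes the minimum degree of G. -/
open SimpleGraph

/-- Let `G` be a connected graph of order `n ≥ 2` whose vertex set is partitioned into `p`
independent sets `P 0, …, P (p-1)`. If `δ(G) ≥ |P i|` for some `i`, then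
`χ_d^t(G) ≤ n − n' + 1` where `n' = max{|P i| : δ(G) ≥ |P i|}`. -/
theorem stmt8 {V : Type*} [Fintype V] (G : SimpleGraph V) [DecidableRel G.Adj]
    (hconn : G.Connected) (hn : 2 ≤ Fintype.card V)
    (p : ℕ) (P : Fin p → Finset V)
    (hdisj : ∀ i j : Fin p, i ≠ j → Disjoint (P i) (P j))
    (hcover : ∀ v : V, ∃ i : Fin p, v ∈ P i)
    (hindep : ∀ i : Fin p, ∀ u ∈ P i, ∀ v ∈ P i, ¬ G.Adj u v)
    (hδ : ∃ i : Fin p, (P i).card ≤ G.minDegree) :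
    tdChromNum G ≤
      Fintype.card V - sSup {m : ℕ | ∃ i : Fin p, m = (P i).card ∧ m ≤ G.minDegree} + 1 := by
  classical
  set n' : ℕ := sSup {m : ℕ | ∃ i : Fin p, m = (P i).card ∧ m ≤ G.minDegree} with hn'
  have hmem : n' ∈ {m : ℕ | ∃ i : Fin p, m = (P i).card ∧ m ≤ G.minDegree} := by
    apply Nat.sSup_mem
    · obtain ⟨i, hi⟩ := hδ
      exact ⟨(P i).card, i, rfl, hi⟩
    · exact ⟨G.minDegree, fun m hm => by obtain ⟨i, rfl, h⟩ := hm; exact h⟩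
  obtain ⟨i0, hcard0, hle0⟩ := hmem
  set S : Finset V := P i0 with hS
  -- every vertex has a neighbor
  have hevery : ∀ v : V, ∃ w : V, G.Adj v w := by
    intro v
    obtain ⟨w, hw⟩ := Fintype.exists_ne_of_one_lt_card (by omega) v
    obtain ⟨q⟩ := hconn.preconnected v w
    exact ⟨q.getVert 1, q.adj_snd (SimpleGraph.Walk.not_nil_of_ne hw.symm)⟩
  set k : ℕ := Fintype.card V - n' with hk
  have hcardsub : Fintype.card {v : V // v ∉ S} = k := by
    have : Fintype.card {v : V // v ∉ S} = Fintype.card V - Fintype.card {v : V // v ∈ S} :=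
      Fintype.card_subtype_compl _
    rw [this, Fintype.card_coe, hk, hcard0]
  let e : {v : V // v ∉ S} ≃ Fin k := Fintype.equivFinOfCardEq hcardsub
  let f : V → Fin (k + 1) := fun v => if h : v ∈ S then 0 else (e ⟨v, h⟩).succ
  have hf0 : ∀ v (h : v ∈ S), f v = 0 := fun v h => dif_pos h
  have hf1 : ∀ v (h : v ∉ S), f v = (e ⟨v, h⟩).succ := fun v h => dif_neg h
  have hfne : ∀ v (h : v ∉ S), f v ≠ 0 := by
    intro v h
    rw [hf1 v h]
    exact Fin.succ_ne_zero _
  have hinj : ∀ u v (hu : u ∉ S) (hv : v ∉ S), f u = f v → u = v := by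
    intro u v hu hv h
    rw [hf1 u hu, hf1 v hv] at h
    have := e.injective (Fin.succ_injective _ h)
    exact congrArg Subtype.val this
  have hproper : ∀ u v : V, G.Adj u v → f u ≠ f v := by
    intro u v huv heq
    by_cases hu : u ∈ S <;> by_cases hv : v ∈ S
    · exact hindep i0 u hu v hv huv
    · exact hfne v hv (by rw [← heq]; exact hf0 u hu)
    · exact hfne u hu (by rw [heq]; exact hf0 v hv)
    · exact G.irrefl (hinj u v hu hv heq ▸ huv)
  have hdom : ∀ v : V, ∃ i : Fin (k + 1), (∃ u, f u = i) ∧ ∀ u : V, f u = i → G.Adj v u := by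
    intro v
    by_cases hcase : ∃ u ∈ G.neighborFinset v, u ∉ S
    · obtain ⟨u, hu, huS⟩ := hcase
      refine ⟨f u, ⟨u, rfl⟩, fun w hw => ?_⟩
      have hwS : w ∉ S := fun h => hfne u huS (by rw [← hw]; exact hf0 w h)
      have := hinj w u hwS huS hw
      rw [this]
      exact (G.mem_neighborFinset v u).mp hu
    · push_neg at hcase
      have hsub : G.neighborFinset v ⊆ S := fun u hu => hcase u hu
      have hcardle : S.card ≤ (G.neighborFinset v).card := by
        rw [G.card_neighborFinset_eq_degree]
        calc S.card = n' := hcard0.symm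
          _ ≤ G.minDegree := hle0
          _ ≤ G.degree v := G.minDegree_le_degree v
      have heqset : G.neighborFinset v = S := Finset.eq_of_subset_of_card_le hsub hcardle
      obtain ⟨w, hvw⟩ := hevery v
      have hwS : w ∈ S := heqset ▸ (G.mem_neighborFinset v w).mpr hvw
      refine ⟨0, ⟨w, hf0 w hwS⟩, fun u hu => ?_⟩
      have huS : u ∈ S := by
        by_contra h
        exact hfne u h hu
      exact (G.mem_neighborFinset v u).mp (heqset ▸ huS)
  have : k + 1 ∈ {n : ℕ | ∃ f : V → Fin n, IsTDColoring G f} := ⟨f, hproper, hdom⟩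
  exact Nat.sInf_le this
end

section
/- Let G be a finite simple connected graph of order n ≥ 2 with maximum degree Δ(G) = n − 1, and let v_1, ..., v_ℓ be all the vertices of G of degree n − 1. Then χ_d^t(G) = ℓ + χ(G[V(G) − {v_1, ..., v_ℓ}]), where χ denotes the chromatic number of the induced subgraph on the remaining vertices. -/
open SimpleGraph

/-- A vertex of full degree is adjacent to every other vertex. -/
lemma full_adj' {V : Type*} [Fintype V] [DecidableEq V] (G : SimpleGraph V)
    [DecidableRel G.Adj] {v : V} (h : G.degree v = Fintype.card V - 1) :
    ∀ u, u ≠ v → G.Adj v u := by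
  have hsub : G.neighborFinset v ⊆ Finset.univ.erase v := by
    intro u hu
    rw [SimpleGraph.mem_neighborFinset] at hu
    exact Finset.mem_erase.mpr ⟨hu.ne', Finset.mem_univ u⟩
  have hcard : (Finset.univ.erase v).card ≤ (G.neighborFinset v).card := by
    rw [Finset.card_erase_of_mem (Finset.mem_univ v), Finset.card_univ]
    rw [SimpleGraph.degree] at h
    omega
  have heq := Finset.eq_of_subset_of_card_le hsub hcard
  intro u hu
  have : u ∈ G.neighborFinset v := by
    rw [heq]; exact Finset.mem_erase.mpr ⟨hu, Finset.mem_univ u⟩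
  rwa [SimpleGraph.mem_neighborFinset] at this

/-- If `G` is a connected graph of order `n ≥ 2` with `Δ(G) = n − 1` and `v_1, …, v_ℓ` are
all the vertices of degree `n − 1`, then `χ_d^t(G) = ℓ + χ(G[V − {v_1, …, v_ℓ}])`. -/
theorem stmt10 {V : Type*} [Fintype V] (G : SimpleGraph V) [DecidableRel G.Adj]
    (hconn : G.Connected) (hn : 2 ≤ Fintype.card V)
    (hΔ : G.maxDegree = Fintype.card V - 1) :
    (tdChromNum G : ℕ∞) =
      (Finset.univ.filter fun v : V => G.degree v = Fintype.card V - 1).card +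
        (G.induce {v : V | ¬ G.degree v = Fintype.card V - 1}).chromaticNumber := by
  classical
  set N := Fintype.card V with hN
  set F : Finset V := Finset.univ.filter (fun v : V => G.degree v = N - 1) with hFdef
  set S : Set V := {v : V | ¬ G.degree v = N - 1} with hSdef
  set H : SimpleGraph S := G.induce S with hHdef
  set ℓ : ℕ := F.card with hl
  have hmemF : ∀ v : V, v ∈ F ↔ G.degree v = N - 1 := by
    intro v; simp [hFdef]
  -- full vertices are adjacent to all other vertices
  have hfull : ∀ v ∈ F, ∀ u, u ≠ v → G.Adj v u := by
    intro v hv u hu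
    exact full_adj' G ((hmemF v).mp hv) u hu
  -- in a proper coloring, the color class of a full vertex is a singleton
  have hsingle : ∀ {k : ℕ} (f : V → Fin k), (∀ u v : V, G.Adj u v → f u ≠ f v) →
      ∀ v ∈ F, ∀ u, f u = f v → u = v := by
    intro k f hp v hv u hfu
    by_contra hne
    exact hp v u (hfull v hv u hne) hfu.symm
  -- there is a full vertex
  obtain ⟨v₁, hv₁⟩ : ∃ v, v ∈ F := by
    haveI : Nonempty V := Fintype.card_pos_iff.mp (by omega)
    obtain ⟨v, hv⟩ := G.exists_maximal_degree_vertex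
    exact ⟨v, (hmemF v).mpr (by rw [← hv, hΔ])⟩
  -- chromatic number of H is a natural number c
  haveI : Fintype S := (Set.toFinite S).fintype
  obtain ⟨c, hc⟩ : ∃ c : ℕ, H.chromaticNumber = (c : ℕ∞) := by
    have h1 : H.chromaticNumber ≤ (Fintype.card S : ℕ∞) :=
      (H.colorable_of_fintype).chromaticNumber_le
    have h2 : H.chromaticNumber ≠ ⊤ := ne_top_of_le_ne_top (WithTop.coe_ne_top) h1
    obtain ⟨c, hc⟩ := WithTop.ne_top_iff_exists.mp h2
    exact ⟨c, hc.symm⟩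
  have hcol : H.Colorable c := SimpleGraph.chromaticNumber_le_iff_colorable.mp hc.le
  obtain ⟨g⟩ := hcol
  let e : F ≃ Fin ℓ := F.equivFin
  -- the coloring witnessing the upper bound
  let f : V → Fin (ℓ + c) := fun v =>
    if h : G.degree v = N - 1 then Fin.castAdd c (e ⟨v, (hmemF v).mpr h⟩)
    else Fin.natAdd ℓ (g ⟨v, h⟩)
  have hfF : ∀ (v) (h : G.degree v = N - 1),
      f v = Fin.castAdd c (e ⟨v, (hmemF v).mpr h⟩) := by
    intro v h; simp only [f, dif_pos h]
  have hfS : ∀ (v) (h : ¬ G.degree v = N - 1), f v = Fin.natAdd ℓ (g ⟨v, h⟩) := by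
    intro v h; simp only [f, dif_neg h]
  have hproper : ∀ u v : V, G.Adj u v → f u ≠ f v := by
    intro u v huv h
    by_cases du : G.degree u = N - 1 <;> by_cases dv : G.degree v = N - 1
    · rw [hfF u du, hfF v dv] at h
      have : (⟨u, (hmemF u).mpr du⟩ : F) = ⟨v, (hmemF v).mpr dv⟩ :=
        e.injective (Fin.castAdd_injective ℓ c h)
      exact huv.ne (Subtype.ext_iff.mp this)
    · rw [hfF u du, hfS v dv] at h
      have h' := congrArg Fin.val h
      simp only [Fin.coe_castAdd, Fin.coe_natAdd] at h'
      have := (e ⟨u, (hmemF u).mpr du⟩).isLt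
      omega
    · rw [hfS u du, hfF v dv] at h
      have h' := congrArg Fin.val h
      simp only [Fin.coe_castAdd, Fin.coe_natAdd] at h'
      have := (e ⟨v, (hmemF v).mpr dv⟩).isLt
      omega
    · rw [hfS u du, hfS v dv] at h
      have hadj : H.Adj ⟨u, du⟩ ⟨v, dv⟩ := huv
      have h' := congrArg Fin.val h
      simp only [Fin.coe_natAdd] at h'
      exact g.valid hadj (Fin.ext (by omega))
  -- members of the class of a full vertex are that vertex; members of a class of an
  -- S-vertex are in S
  have hclassF : ∀ w ∈ F, ∀ u, f u = f w → u = w := hsingle f hproper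
  have hclassS : ∀ (w : V) (hw : ¬ G.degree w = N - 1), ∀ u, f u = f w →
      ¬ G.degree u = N - 1 := by
    intro w hw u hu du
    rw [hfF u du, hfS w hw] at hu
    have h' := congrArg Fin.val hu
    simp only [Fin.coe_castAdd, Fin.coe_natAdd] at h'
    have := (e ⟨u, (hmemF u).mpr du⟩).isLt
    omega
  have hfmem : (ℓ + c) ∈ {k : ℕ | ∃ f : V → Fin k, IsTDColoring G f} := by
    refine ⟨f, hproper, ?_⟩
    intro v
    by_cases hv : v = v₁
    · subst hv
      by_cases hex : ∃ v₂ ∈ F, v₂ ≠ v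
      · obtain ⟨v₂, hv₂, hne⟩ := hex
        refine ⟨f v₂, ⟨v₂, rfl⟩, fun u hu => ?_⟩
        rw [hclassF v₂ hv₂ u hu]
        exact hfull v hv₁ v₂ hne
      · have hw : ∃ w : V, ¬ G.degree w = N - 1 := by
          by_contra hall
          push_neg at hall
          have : ∀ a b : V, a = b := by
            intro a b
            have ha : a = v := by
              by_contra h
              exact (not_exists.mp hex a) ⟨(hmemF a).mpr (hall a), h⟩
            have hb : b = v := by
              by_contra h
              exact (not_exists.mp hex b) ⟨(hmemF b).mpr (hall b), h⟩
            rw [ha, hb]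
          have := Fintype.card_le_one_iff.mpr this
          omega
        obtain ⟨w, hw⟩ := hw
        refine ⟨f w, ⟨w, rfl⟩, fun u hu => ?_⟩
        have hus := hclassS w hw u hu
        have hune : u ≠ v := by
          intro h; rw [h] at hus; exact hus ((hmemF v).mp hv₁)
        exact hfull v hv₁ u hune
    · refine ⟨f v₁, ⟨v₁, rfl⟩, fun u hu => ?_⟩
      rw [hclassF v₁ hv₁ u hu]
      exact (hfull v₁ hv₁ v hv).symm
  -- lower bound: any TD coloring uses at least ℓ + c colors
  have hlb : ∀ k ∈ {k : ℕ | ∃ f : V → Fin k, IsTDColoring G f}, ℓ + c ≤ k := by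
    rintro k ⟨p, hp, -⟩
    -- p is injective on F
    have hpinj : Set.InjOn p F := by
      intro a ha b hb hab
      exact hsingle p hp b hb a hab
    set T : Finset (Fin k) := F.image p with hT
    have hTcard : T.card = ℓ := Finset.card_image_of_injOn hpinj
    have hlk : ℓ ≤ k := by
      rw [← hTcard]
      simpa using Finset.card_le_card (Finset.subset_univ T)
    -- S-vertices avoid colors of T
    have havoid : ∀ w : S, p ↑w ∉ T := by
      rintro ⟨w, hw⟩ hmem
      obtain ⟨x, hx, hpx⟩ := Finset.mem_image.mp hmem
      have := hsingle p hp x hx w hpx.symm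
      rw [this] at hw
      exact hw ((hmemF x).mp hx)
    have hTc : Tᶜ.card = k - ℓ := by
      rw [Finset.card_compl, hTcard]
      simp
    -- a coloring of H with k - ℓ colors
    let C : S → Fin (k - ℓ) := fun w =>
      Fin.cast hTc (Tᶜ.equivFin ⟨p ↑w, Finset.mem_compl.mpr (havoid w)⟩)
    have hCvalid : ∀ {a b : S}, H.Adj a b → C a ≠ C b := by
      intro a b hab hC
      have h1 := congrArg Fin.val hC
      simp only [C, Fin.coe_cast] at h1
      have h2 : p ↑a = p ↑b :=
        Subtype.ext_iff.mp (Tᶜ.equivFin.injective (Fin.ext h1))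
      exact hp ↑a ↑b hab h2
    have hcolH : H.Colorable (k - ℓ) := ⟨SimpleGraph.Coloring.mk C hCvalid⟩
    have : (c : ℕ∞) ≤ (k - ℓ : ℕ) := hc ▸ hcolH.chromaticNumber_le
    have hck : c ≤ k - ℓ := Nat.cast_le.mp this
    omega
  have hmain : tdChromNum G = ℓ + c := by
    rw [tdChromNum]
    exact le_antisymm (Nat.sInf_le hfmem) (le_csInf ⟨_, hfmem⟩ hlb)
  rw [hmain, hc]
  push_cast
  rfl
end

section
/- Let W_n (n ≥ 3) be the wheel of order n + 1. Then χ_d^t(W_n) = 3 if n is even, and χ_d^t(W_n) = 4 if n is odd. -/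
open SimpleGraph

/-- The wheel `W_n`: the cycle `C_n` together with a hub (`none`) adjacent to all
vertices of the cycle. -/
def wheelGraph (n : ℕ) : SimpleGraph (Option (Fin n)) :=
  SimpleGraph.fromRel (fun u v =>
    u = none ∨ ∃ i j : Fin n, u = some i ∧ v = some j ∧ (SimpleGraph.cycleGraph n).Adj i j)

/- ----------------- auxiliary lemmas ----------------- -/

theorem wheel_adj_hub {n : ℕ} (i : Fin n) : (wheelGraph n).Adj none (some i) := by
  rw [wheelGraph, fromRel_adj]
  exact ⟨fun h => (nomatch h), Or.inl (Or.inl rfl)⟩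

theorem wheel_adj_some {n : ℕ} {i j : Fin n} :
    (wheelGraph n).Adj (some i) (some j) ↔ (cycleGraph n).Adj i j := by
  rw [wheelGraph, fromRel_adj]
  constructor
  · rintro ⟨hne, (h | ⟨a, b, ha, hb, hadj⟩) | (h | ⟨a, b, ha, hb, hadj⟩)⟩
    · exact nomatch h
    · obtain rfl : a = i := (Option.some.inj ha).symm
      obtain rfl : b = j := (Option.some.inj hb).symm
      exact hadj
    · exact nomatch h
    · obtain rfl : a = j := (Option.some.inj ha).symm
      obtain rfl : b = i := (Option.some.inj hb).symm
      exact hadj.symm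
  · intro h
    exact ⟨fun he => h.ne (Option.some.inj he), Or.inl (Or.inr ⟨i, j, rfl, rfl, h⟩)⟩

theorem cycle_adj_val {n : ℕ} (hn : 3 ≤ n) {i j : Fin n} (h : (cycleGraph n).Adj i j) :
    i.val = (j.val + 1) % n ∨ j.val = (i.val + 1) % n := by
  haveI : NeZero n := ⟨by omega⟩
  have h1 : (1 : Fin n).val = 1 := by rw [Fin.val_one']; exact Nat.mod_eq_of_lt (by omega)
  rw [cycleGraph_adj'] at h
  rcases h with h | h
  · left
    have e1 : i - j = 1 := Fin.ext (by rw [h, h1])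
    have e2 : i = j + 1 := by rwa [sub_eq_iff_eq_add'] at e1
    rw [e2, Fin.add_def, h1]
  · right
    have e1 : j - i = 1 := Fin.ext (by rw [h, h1])
    have e2 : j = i + 1 := by rwa [sub_eq_iff_eq_add'] at e1
    rw [e2, Fin.add_def, h1]

theorem cycle_adj_succ {n : ℕ} (hn : 3 ≤ n) (k : ℕ) (h1 : k < n) (h2 : k + 1 < n) :
    (cycleGraph n).Adj ⟨k, h1⟩ ⟨k + 1, h2⟩ := by
  rw [cycleGraph_adj']
  right
  rw [Fin.sub_def]
  simp only
  have : n - k + (k + 1) = n + 1 := by omega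
  rw [this, Nat.add_mod_left, Nat.mod_eq_of_lt (by omega)]

theorem cycle_adj_last {n : ℕ} (hn : 3 ≤ n) :
    (cycleGraph n).Adj ⟨0, by omega⟩ ⟨n - 1, by omega⟩ := by
  rw [cycleGraph_adj']
  left
  rw [Fin.sub_def]
  simp only
  have : n - (n - 1) + 0 = 1 := by omega
  rw [this, Nat.mod_eq_of_lt (by omega)]

theorem parity_ne {n : ℕ} (hn : 3 ≤ n) (he : Even n) {i j : Fin n}
    (h : (cycleGraph n).Adj i j) : i.val % 2 ≠ j.val % 2 := by
  have h2 : n % 2 = 0 := Nat.even_iff.1 he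
  have hi := i.isLt; have hj := j.isLt
  rcases cycle_adj_val hn h with h | h
  · rcases Nat.lt_or_ge (j.val + 1) n with hlt | hge
    · rw [Nat.mod_eq_of_lt hlt] at h; omega
    · have hjn : j.val + 1 = n := by omega
      rw [hjn, Nat.mod_self] at h; omega
  · rcases Nat.lt_or_ge (i.val + 1) n with hlt | hge
    · rw [Nat.mod_eq_of_lt hlt] at h; omega
    · have hin : i.val + 1 = n := by omega
      rw [hin, Nat.mod_self] at h; omega

theorem parity_ne' {n : ℕ} (hn : 3 ≤ n) {i j : Fin n}
    (h : (cycleGraph n).Adj i j) (hi0 : i.val ≠ 0) (hj0 : j.val ≠ 0) :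
    i.val % 2 ≠ j.val % 2 := by
  have hi := i.isLt; have hj := j.isLt
  rcases cycle_adj_val hn h with h | h
  · have hlt : j.val + 1 < n := by
      rcases Nat.lt_or_ge (j.val + 1) n with hlt | hge
      · exact hlt
      · exfalso
        have hjn : j.val + 1 = n := by omega
        rw [hjn, Nat.mod_self] at h
        exact hi0 h
    rw [Nat.mod_eq_of_lt hlt] at h; omega
  · have hlt : i.val + 1 < n := by
      rcases Nat.lt_or_ge (i.val + 1) n with hlt | hge
      · exact hlt
      · exfalso
        have hin : i.val + 1 = n := by omega
        rw [hin, Nat.mod_self] at h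
        exact hj0 h
    rw [Nat.mod_eq_of_lt hlt] at h; omega

theorem fin3_pigeon : ∀ a b d e : Fin 3, a ≠ b → a ≠ d → b ≠ d → e ≠ d → e ≠ a → e = b := by
  intro a b d e h1 h2 h3 h4 h5
  have := a.isLt; have := b.isLt; have := d.isLt; have := e.isLt
  rw [Fin.ne_iff_vne] at h1 h2 h3 h4 h5
  exact Fin.ext (by omega)

/-- Lower bound 3: any proper coloring of the wheel needs at least 3 colors. -/
theorem wheel_low3 {n : ℕ} (hn : 3 ≤ n) {m : ℕ} (f : Option (Fin n) → Fin m)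
    (hprop : ∀ u v, (wheelGraph n).Adj u v → f u ≠ f v) : 3 ≤ m := by
  have h0 : (0 : ℕ) < n := by omega
  have h1 : (1 : ℕ) < n := by omega
  have hadj : (cycleGraph n).Adj ⟨0, h0⟩ ⟨1, h1⟩ := cycle_adj_succ hn 0 h0 h1
  have ha : f (some ⟨0, h0⟩) ≠ f (some ⟨1, h1⟩) := hprop _ _ (wheel_adj_some.2 hadj)
  have hb : f none ≠ f (some ⟨0, h0⟩) := hprop _ _ (wheel_adj_hub _)
  have hc : f none ≠ f (some ⟨1, h1⟩) := hprop _ _ (wheel_adj_hub _)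
  by_contra hm
  rw [Fin.ne_iff_vne] at ha hb hc
  have := (f none).isLt
  have := (f (some ⟨0, h0⟩)).isLt
  have := (f (some ⟨1, h1⟩)).isLt
  omega

/-- An odd wheel admits no proper 3-coloring. -/
theorem wheel_odd_no3 {n : ℕ} (hn : 3 ≤ n) (hodd : Odd n) (f : Option (Fin n) → Fin 3)
    (hprop : ∀ u v, (wheelGraph n).Adj u v → f u ≠ f v) : False := by
  have hc : ∀ i : Fin n, f (some i) ≠ f none :=
    fun i h => hprop none (some i) (wheel_adj_hub i) h.symm
  have h0 : (0 : ℕ) < n := by omega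
  have key : ∀ k, ∀ hk : k < n,
      (f (some ⟨k, hk⟩) = f (some ⟨0, h0⟩) ↔ k % 2 = 0) := by
    intro k
    induction k with
    | zero => intro hk; simp
    | succ k ih =>
      intro hk
      have hk' : k < n := by omega
      have hadj := cycle_adj_succ hn k hk' hk
      have hne : f (some ⟨k, hk'⟩) ≠ f (some ⟨k + 1, hk⟩) :=
        hprop _ _ (wheel_adj_some.2 hadj)
      have ihk := ih hk'
      by_cases ha : f (some ⟨k, hk'⟩) = f (some ⟨0, h0⟩)
      · have hk2 : k % 2 = 0 := ihk.1 ha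
        constructor
        · intro hb; exact absurd (ha.trans hb.symm) hne
        · intro h; omega
      · have hk2 : k % 2 = 1 := by
          have : ¬ k % 2 = 0 := fun h => ha (ihk.2 h)
          omega
        constructor
        · intro _; omega
        · intro _
          exact (fin3_pigeon (f (some ⟨k, hk'⟩)) (f (some ⟨k + 1, hk⟩)) (f none)
            (f (some ⟨0, h0⟩)) hne (hc _) (hc _) (hc _) (Ne.symm ha)).symm
  have h1 : n - 1 < n := by omega
  have heven : (n - 1) % 2 = 0 := by obtain ⟨t, ht⟩ := hodd; omega
  have heq := (key (n - 1) h1).2 heven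
  have hadj := cycle_adj_last hn
  exact hprop _ _ (wheel_adj_some.2 hadj) heq.symm

/-- For the wheel `W_n` (`n ≥ 3`): `χ_d^t(W_n) = 3` if `n` is even and `= 4` if `n` is odd. -/
theorem stmt11 (n : ℕ) (hn : 3 ≤ n) :
    (Even n → tdChromNum (wheelGraph n) = 3) ∧
    (Odd n → tdChromNum (wheelGraph n) = 4) := by
  constructor
  · intro he
    have mem3 : 3 ∈ {m : ℕ | ∃ f : Option (Fin n) → Fin m, IsTDColoring (wheelGraph n) f} := by
      refine ⟨fun v => match v with
        | none => 0
        | some i => if i.val % 2 = 0 then 1 else 2, ?_, ?_⟩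
      · intro u v hadj
        match u, v with
        | none, none => exact absurd rfl hadj.ne
        | none, some j =>
          show (0 : Fin 3) ≠ if j.val % 2 = 0 then 1 else 2
          split <;> decide
        | some i, none =>
          show (if i.val % 2 = 0 then (1 : Fin 3) else 2) ≠ 0
          split <;> decide
        | some i, some j =>
          have hcyc := wheel_adj_some.1 hadj
          have hpar := parity_ne hn he hcyc
          show (if i.val % 2 = 0 then (1 : Fin 3) else 2) ≠ if j.val % 2 = 0 then 1 else 2
          split_ifs with hi hj hj
          · exfalso; omega
          · decide
          · decide
          · exfalso; omega
      · intro v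
        match v with
        | none =>
          refine ⟨1, ⟨some ⟨0, by omega⟩, by norm_num⟩, ?_⟩
          intro u hu
          match u with
          | none => exact absurd hu (show (0 : Fin 3) ≠ 1 from by decide)
          | some k => exact wheel_adj_hub k
        | some i =>
          refine ⟨0, ⟨none, rfl⟩, ?_⟩
          intro u hu
          match u with
          | none => exact (wheel_adj_hub i).symm
          | some k =>
            exfalso
            revert hu
            show (if k.val % 2 = 0 then (1 : Fin 3) else 2) = 0 → False
            split <;> decide
    rw [tdChromNum]
    refine le_antisymm (Nat.sInf_le mem3) (le_csInf ⟨3, mem3⟩ ?_)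
    rintro m ⟨f, hprop, -⟩
    exact wheel_low3 hn f hprop
  · intro ho
    have mem4 : 4 ∈ {m : ℕ | ∃ f : Option (Fin n) → Fin m, IsTDColoring (wheelGraph n) f} := by
      refine ⟨fun v => match v with
        | none => 0
        | some i => if i.val = 0 then 3 else if i.val % 2 = 1 then 1 else 2, ?_, ?_⟩
      · intro u v hadj
        match u, v with
        | none, none => exact absurd rfl hadj.ne
        | none, some j =>
          show (0 : Fin 4) ≠ if j.val = 0 then 3 else if j.val % 2 = 1 then 1 else 2
          split_ifs <;> decide
        | some i, none =>
          show (if i.val = 0 then (3 : Fin 4) else if i.val % 2 = 1 then 1 else 2) ≠ 0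
          split_ifs <;> decide
        | some i, some j =>
          have hcyc := wheel_adj_some.1 hadj
          show (if i.val = 0 then (3 : Fin 4) else if i.val % 2 = 1 then 1 else 2) ≠
            if j.val = 0 then 3 else if j.val % 2 = 1 then 1 else 2
          by_cases hi0 : i.val = 0
          · by_cases hj0 : j.val = 0
            · exact absurd (Fin.ext (hi0.trans hj0.symm)) hcyc.ne
            · simp only [if_pos hi0, if_neg hj0]
              split <;> decide
          · by_cases hj0 : j.val = 0
            · simp only [if_neg hi0, if_pos hj0]
              split <;> decide
            · have hpar := parity_ne' hn hcyc hi0 hj0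
              simp only [if_neg hi0, if_neg hj0]
              split_ifs with h1 h2 h2
              · exfalso; omega
              · decide
              · decide
              · exfalso; omega
      · intro v
        match v with
        | none =>
          refine ⟨3, ⟨some ⟨0, by omega⟩, by norm_num⟩, ?_⟩
          intro u hu
          match u with
          | none => exact absurd hu (show (0 : Fin 4) ≠ 3 from by decide)
          | some k => exact wheel_adj_hub k
        | some i =>
          refine ⟨0, ⟨none, rfl⟩, ?_⟩
          intro u hu
          match u with
          | none => exact (wheel_adj_hub i).symm
          | some k =>
            exfalso
            revert hu
            show (if k.val = 0 then (3 : Fin 4) else if k.val % 2 = 1 then 1 else 2) = 0 → False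
            split_ifs <;> decide
    rw [tdChromNum]
    refine le_antisymm (Nat.sInf_le mem4) (le_csInf ⟨4, mem4⟩ ?_)
    rintro m ⟨f, hprop, -⟩
    by_contra hlt
    push_neg at hlt
    have h3 := wheel_low3 hn f hprop
    have hm : m = 3 := by omega
    subst hm
    exact wheel_odd_no3 hn ho f hprop
end

section
/- Let C̄_n be the complement of the cycle C_n of order n ≥ 4. Then χ_d^t(C̄_n) = 4 if n ∈ {4, 5}, and χ_d^t(C̄_n) = ⌈n/2⌉ if n ≥ 6. -/
open SimpleGraph

section Aux

instance {V : Type*} [Fintype V] [DecidableEq V] (G : SimpleGraph V) [DecidableRel G.Adj]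
    {n : ℕ} (f : V → Fin n) : Decidable (IsTDColoring G f) := by
  unfold IsTDColoring; infer_instance

lemma aux_sub_val_eq_one {n : ℕ} (hn : 2 ≤ n) (u v : Fin n) :
    (u - v).val = 1 ↔ (v.val + 1 = u.val ∨ (v.val + 1 = n ∧ u.val = 0)) := by
  have hu := u.isLt; have hv := v.isLt
  rw [Fin.sub_def]
  simp only []
  rcases Nat.lt_or_ge (n - v.val + u.val) n with h | h
  · rw [Nat.mod_eq_of_lt h]; omega
  · rw [Nat.mod_eq_sub_mod h, Nat.mod_eq_of_lt (by omega)]; omega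

lemma aux_cycle_adj_nat {n : ℕ} (hn : 2 ≤ n) (u v : Fin n) :
    (cycleGraph n).Adj u v ↔ (u.val + 1 = v.val ∨ v.val + 1 = u.val ∨
      (u.val = 0 ∧ v.val + 1 = n) ∨ (v.val = 0 ∧ u.val + 1 = n)) := by
  rw [cycleGraph_adj', aux_sub_val_eq_one hn, aux_sub_val_eq_one hn]
  tauto

lemma aux_compl_cycle_adj_nat {n : ℕ} (hn : 2 ≤ n) (u v : Fin n) :
    ((cycleGraph n)ᶜ).Adj u v ↔ (u.val ≠ v.val ∧ ¬(u.val + 1 = v.val ∨ v.val + 1 = u.val ∨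
      (u.val = 0 ∧ v.val + 1 = n) ∨ (v.val = 0 ∧ u.val + 1 = n))) := by
  rw [compl_adj, aux_cycle_adj_nat hn, Ne, Fin.ext_iff]

lemma aux_lower_bound {n m : ℕ} (hn : 4 ≤ n) (f : Fin n → Fin m)
    (hf : ∀ u v : Fin n, ((cycleGraph n)ᶜ).Adj u v → f u ≠ f v) : n ≤ 2 * m := by
  classical
  have key : ∀ i : Fin m, (Finset.univ.filter (fun x => f x = i)).card ≤ 2 := by
    intro i
    by_contra h
    rw [not_le] at h
    obtain ⟨a, ha, b, hb, c, hc, hab, hac, hbc⟩ := Finset.two_lt_card.mp h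
    simp only [Finset.mem_filter] at ha hb hc
    have adj : ∀ x y : Fin n, x ≠ y → f x = i → f y = i →
        (x.val + 1 = y.val ∨ y.val + 1 = x.val ∨
          (x.val = 0 ∧ y.val + 1 = n) ∨ (y.val = 0 ∧ x.val + 1 = n)) := by
      intro x y hxy hx hy
      by_contra hadj
      exact hf x y ((aux_compl_cycle_adj_nat (by omega) x y).mpr
        ⟨fun h => hxy (Fin.ext h), hadj⟩) (hx.trans hy.symm)
    have h1 := adj a b hab ha.2 hb.2
    have h2 := adj a c hac ha.2 hc.2
    have h3 := adj b c hbc hb.2 hc.2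
    have hab' : a.val ≠ b.val := fun h => hab (Fin.ext h)
    have hac' : a.val ≠ c.val := fun h => hac (Fin.ext h)
    have hbc' : b.val ≠ c.val := fun h => hbc (Fin.ext h)
    have := a.isLt; have := b.isLt; have := c.isLt
    omega
  calc n = (Finset.univ : Finset (Fin n)).card := by simp
    _ = ∑ i : Fin m, (Finset.univ.filter (fun x => f x = i)).card :=
        Finset.card_eq_sum_card_fiberwise (fun x _ => Finset.mem_univ (f x))
    _ ≤ ∑ _i : Fin m, 2 := Finset.sum_le_sum (fun i _ => key i)
    _ = 2 * m := by simp [Nat.mul_comm]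

lemma aux_exists_good (m x y : ℕ) (h : 3 ≤ m) : ∃ k, k < m ∧ k ≠ x ∧ k ≠ y := by
  by_cases h0 : x = 0 ∨ y = 0
  · by_cases h1 : x = 1 ∨ y = 1
    · exact ⟨2, by omega⟩
    · exact ⟨1, by omega⟩
  · exact ⟨0, by omega⟩

lemma aux_upper_mem {n : ℕ} (hn : 6 ≤ n) :
    ∃ f : Fin n → Fin ((n+1)/2), IsTDColoring ((cycleGraph n)ᶜ) f := by
  refine ⟨fun v => ⟨v.val / 2, by have := v.isLt; omega⟩, ?_, ?_⟩
  · intro u v hadj hfeq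
    rw [aux_compl_cycle_adj_nat (by omega)] at hadj
    have heq : u.val / 2 = v.val / 2 := congrArg Fin.val hfeq
    have := u.isLt; have := v.isLt
    omega
  · intro v
    have hv := v.isLt
    have hb : (v.val + 1 < n ∧ (v.val + 1) % n = v.val + 1) ∨
        (v.val + 1 = n ∧ (v.val + 1) % n = 0) := by
      rcases Nat.lt_or_ge (v.val + 1) n with h | h
      · exact Or.inl ⟨h, Nat.mod_eq_of_lt h⟩
      · have he : v.val + 1 = n := by omega
        exact Or.inr ⟨he, by simp [he]⟩
    have hc : (v.val ≠ 0 ∧ (v.val + (n-1)) % n = v.val - 1) ∨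
        (v.val = 0 ∧ (v.val + (n-1)) % n = n - 1) := by
      rcases eq_or_ne v.val 0 with h | h
      · refine Or.inr ⟨h, ?_⟩
        rw [h, Nat.zero_add, Nat.mod_eq_of_lt (by omega)]
      · refine Or.inl ⟨h, ?_⟩
        rw [Nat.mod_eq_sub_mod (by omega), Nat.mod_eq_of_lt (by omega)]
        omega
    have claim : ∃ k, k < n / 2 ∧ k ≠ v.val / 2 ∧ k ≠ (v.val + 1) % n / 2 ∧
        k ≠ (v.val + (n-1)) % n / 2 := by
      rcases Nat.even_or_odd v.val with hpar | hpar
      · rcases eq_or_ne v.val (n - 1) with hve | hve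
        · obtain ⟨k, hk1, hk2, hk3⟩ :=
            aux_exists_good (n / 2) ((v.val + 1) % n / 2) ((v.val + (n-1)) % n / 2) (by omega)
          obtain ⟨r, hr⟩ := hpar
          exact ⟨k, hk1, by omega, hk2, hk3⟩
        · obtain ⟨k, hk1, hk2, hk3⟩ :=
            aux_exists_good (n / 2) (v.val / 2) ((v.val + (n-1)) % n / 2) (by omega)
          obtain ⟨r, hr⟩ := hpar
          refine ⟨k, hk1, hk2, ?_, hk3⟩
          omega
      · obtain ⟨k, hk1, hk2, hk3⟩ :=
          aux_exists_good (n / 2) (v.val / 2) ((v.val + 1) % n / 2) (by omega)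
        obtain ⟨r, hr⟩ := hpar
        refine ⟨k, hk1, hk2, hk3, ?_⟩
        omega
    obtain ⟨k, hk1, hkv, hkB, hkC⟩ := claim
    refine ⟨⟨k, by omega⟩, ⟨⟨2 * k, by omega⟩, ?_⟩, ?_⟩
    · apply Fin.ext
      show (2 * k) / 2 = k
      omega
    · intro u hu
      have hu2 : u.val / 2 = k := congrArg Fin.val hu
      have hul := u.isLt
      rw [aux_compl_cycle_adj_nat (by omega)]
      constructor
      · omega
      · rintro (h | h | ⟨h1, h2⟩ | ⟨h1, h2⟩) <;> omega

lemma aux_cast_td {V : Type*} {G : SimpleGraph V} {m k : ℕ} (h : m ≤ k) {f : V → Fin m}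
    (hf : IsTDColoring G f) : IsTDColoring G (fun v => Fin.castLE h (f v)) := by
  obtain ⟨h1, h2⟩ := hf
  refine ⟨fun u v ha he => h1 u v ha (Fin.castLE_injective h he), fun v => ?_⟩
  obtain ⟨i, ⟨u, hu⟩, hall⟩ := h2 v
  exact ⟨Fin.castLE h i, ⟨u, congrArg (Fin.castLE h) hu⟩, fun w hw => hall w (Fin.castLE_injective h hw)⟩

set_option maxRecDepth 10000 in
lemma aux_td4 : IsTDColoring ((cycleGraph 4)ᶜ) (id : Fin 4 → Fin 4) := by decide

set_option maxRecDepth 10000 in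
lemma aux_td5 : IsTDColoring ((cycleGraph 5)ᶜ) (![0, 0, 1, 2, 3] : Fin 5 → Fin 4) := by decide

set_option maxRecDepth 100000 in
set_option maxHeartbeats 1000000 in
lemma aux_no3_4 : ¬ ∃ f : Fin 4 → Fin 3, IsTDColoring ((cycleGraph 4)ᶜ) f := by decide

set_option maxRecDepth 100000 in
set_option maxHeartbeats 1000000 in
lemma aux_no3_5 : ¬ ∃ f : Fin 5 → Fin 3, IsTDColoring ((cycleGraph 5)ᶜ) f := by decide

end Aux

/-- Total dominator chromatic number of complements of cycles: for `n ≥ 4`,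
`χ_d^t(C̄_n) = 4` if `n ∈ {4, 5}` and `χ_d^t(C̄_n) = ⌈n/2⌉` if `n ≥ 6`.
(Here `⌈n/2⌉ = (n + 1)/2` in natural-number arithmetic.) -/
theorem stmt14 (n : ℕ) (hn : 4 ≤ n) :
    (n = 4 ∨ n = 5 → tdChromNum ((SimpleGraph.cycleGraph n)ᶜ) = 4) ∧
    (6 ≤ n → tdChromNum ((SimpleGraph.cycleGraph n)ᶜ) = (n + 1) / 2) := by
  constructor
  · rintro (rfl | rfl)
    · have mem4 : (4 : ℕ) ∈ {m : ℕ | ∃ f : Fin 4 → Fin m, IsTDColoring ((cycleGraph 4)ᶜ) f} :=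
        ⟨id, aux_td4⟩
      refine le_antisymm (Nat.sInf_le mem4) (le_csInf ⟨4, mem4⟩ ?_)
      rintro m ⟨f, hf⟩
      by_contra hm
      exact aux_no3_4 ⟨fun v => Fin.castLE (by omega) (f v), aux_cast_td (by omega) hf⟩
    · have mem4 : (4 : ℕ) ∈ {m : ℕ | ∃ f : Fin 5 → Fin m, IsTDColoring ((cycleGraph 5)ᶜ) f} :=
        ⟨![0, 0, 1, 2, 3], aux_td5⟩
      refine le_antisymm (Nat.sInf_le mem4) (le_csInf ⟨4, mem4⟩ ?_)
      rintro m ⟨f, hf⟩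
      by_contra hm
      exact aux_no3_5 ⟨fun v => Fin.castLE (by omega) (f v), aux_cast_td (by omega) hf⟩
  · intro h6
    have mem := aux_upper_mem h6
    refine le_antisymm (Nat.sInf_le mem) (le_csInf ⟨_, mem⟩ ?_)
    rintro m ⟨f, hf⟩
    have := aux_lower_bound (by omega) f hf.1
    omega
end

section
/- Let P̄_n be the complement of the path P_n of order n ≥ 4. Then χ_d^t(P̄_n) = 3 if n = 4, and χ_d^t(P̄_n) = ⌈n/2⌉ if n ≥ 5. -/
open SimpleGraph

-- Auxiliary lemmas

/-- Every color class of a proper coloring of the complement of a path has size at most 2,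
so `n ≤ 2 * m`. -/
lemma tdc_card_le {n m : ℕ} (f : Fin n → Fin m)
    (hf : IsTDColoring ((SimpleGraph.pathGraph n)ᶜ) f) : n ≤ 2 * m := by
  obtain ⟨hp, _⟩ := hf
  have key : ∀ i : Fin m, (Finset.univ.filter (fun v => f v = i)).card ≤ 2 := by
    intro i
    by_contra h
    push_neg at h
    obtain ⟨a, ha, b, hb, c, hc, hab, hac, hbc⟩ := Finset.two_lt_card.mp h
    simp only [Finset.mem_filter] at ha hb hc
    have adj : ∀ x y : Fin n, x ≠ y → f x = i → f y = i →
        (x.val + 1 = y.val ∨ y.val + 1 = x.val) := by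
      intro x y hxy hx hy
      by_contra hc'
      exact hp x y ((SimpleGraph.compl_adj _ _ _).mpr ⟨hxy, fun h' => hc' (pathGraph_adj.mp h')⟩)
        (hx.trans hy.symm)
    have h1 := adj a b hab ha.2 hb.2
    have h2 := adj a c hac ha.2 hc.2
    have h3 := adj b c hbc hb.2 hc.2
    have hab' : a.val ≠ b.val := fun h => hab (Fin.ext h)
    have hac' : a.val ≠ c.val := fun h => hac (Fin.ext h)
    have hbc' : b.val ≠ c.val := fun h => hbc (Fin.ext h)
    omega
  calc n = Fintype.card (Fin n) := (Fintype.card_fin n).symm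
    _ = ∑ i : Fin m, (Finset.univ.filter (fun v => f v = i)).card := by
        rw [← Finset.card_univ]
        exact Finset.card_eq_sum_card_fiberwise (fun v _ => Finset.mem_univ (f v))
    _ ≤ ∑ _i : Fin m, 2 := Finset.sum_le_sum (fun i _ => key i)
    _ = 2 * m := by simp [Finset.sum_const, mul_comm]

lemma no_tdc_4_2 : ∀ f : Fin 4 → Fin 2, ¬ IsTDColoring ((SimpleGraph.pathGraph 4)ᶜ) f := by
  simp only [IsTDColoring, compl_adj, pathGraph_adj, ne_eq, not_or]
  decide

lemma tdc_4_3 : ∃ f : Fin 4 → Fin 3, IsTDColoring ((SimpleGraph.pathGraph 4)ᶜ) f := by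
  refine ⟨![0, 1, 1, 2], ?_⟩
  simp only [IsTDColoring, compl_adj, pathGraph_adj, ne_eq, not_or]
  decide

/-- For `n ≥ 5`, the coloring `v ↦ ⌊v/2⌋` is a total dominator coloring of `P̄_n`. -/
lemma tdc_upper {n : ℕ} (hn : 5 ≤ n) :
    ∃ f : Fin n → Fin ((n + 1) / 2), IsTDColoring ((SimpleGraph.pathGraph n)ᶜ) f := by
  refine ⟨fun v => ⟨v.val / 2, by omega⟩, ?_, ?_⟩
  · intro u v huv heq
    rw [compl_adj, pathGraph_adj] at huv
    obtain ⟨hne, hpa⟩ := huv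
    have hne' : u.val ≠ v.val := fun h => hne (Fin.ext h)
    have : u.val / 2 = v.val / 2 := congrArg Fin.val heq
    omega
  · intro v
    set a := (v.val - 1) / 2 with ha
    set b := (v.val + 1) / 2 with hb
    obtain ⟨j, hja, hjb, hj3⟩ : ∃ j : ℕ, j ≠ a ∧ j ≠ b ∧ j < 3 := by
      by_cases h0 : 0 ≠ a ∧ 0 ≠ b
      · exact ⟨0, h0.1, h0.2, by omega⟩
      by_cases h1 : 1 ≠ a ∧ 1 ≠ b
      · exact ⟨1, h1.1, h1.2, by omega⟩
      · refine ⟨2, ?_, ?_, by omega⟩ <;> omega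
    refine ⟨⟨j, by omega⟩, ⟨⟨2 * j, by omega⟩, ?_⟩, ?_⟩
    · ext; simp
    · intro u hu
      have hu' : u.val / 2 = j := congrArg Fin.val hu
      rw [compl_adj, pathGraph_adj]
      constructor
      · intro h
        have : v.val = u.val := congrArg Fin.val h
        omega
      · intro h
        omega

/-- Total dominator chromatic number of complements of paths: for `n ≥ 4`,
`χ_d^t(P̄_n) = 3` if `n = 4` and `χ_d^t(P̄_n) = ⌈n/2⌉` if `n ≥ 5`.
(Here `⌈n/2⌉ = (n + 1)/2` in natural-number arithmetic.) -/
theorem stmt15 (n : ℕ) (hn : 4 ≤ n) :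
    (n = 4 → tdChromNum ((SimpleGraph.pathGraph n)ᶜ) = 3) ∧
    (5 ≤ n → tdChromNum ((SimpleGraph.pathGraph n)ᶜ) = (n + 1) / 2) := by
  constructor
  · rintro rfl
    apply le_antisymm
    · exact Nat.sInf_le tdc_4_3
    · have hne : {k : ℕ | ∃ f : Fin 4 → Fin k,
          IsTDColoring ((SimpleGraph.pathGraph 4)ᶜ) f}.Nonempty := ⟨3, tdc_4_3⟩
      apply le_csInf hne
      rintro m ⟨f, hf⟩
      have h2 := tdc_card_le f hf
      by_contra h
      push_neg at h
      have hm : m = 2 := by omega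
      subst hm
      exact no_tdc_4_2 f hf
  · intro h5
    apply le_antisymm
    · exact Nat.sInf_le (tdc_upper h5)
    · have hne : {k : ℕ | ∃ f : Fin n → Fin k,
          IsTDColoring ((SimpleGraph.pathGraph n)ᶜ) f}.Nonempty := ⟨(n + 1) / 2, tdc_upper h5⟩
      apply le_csInf hne
      rintro m ⟨f, hf⟩
      have := tdc_card_le f hf
      omega
end

section
/- Let T be a tree of order n ≥ 3 and let s be the number of support vertices of T. Then χ_d^t(T) ≥ s + 1. -/
open SimpleGraph

lemma aux_exists_adj {V : Type*} [Fintype V] (T : SimpleGraph V)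
    (hc : T.Connected) (hn : 2 ≤ Fintype.card V) (v : V) : ∃ u, T.Adj v u := by
  obtain ⟨w, hw⟩ := Fintype.exists_ne_of_one_lt_card hn v
  obtain ⟨p⟩ := hc v w
  cases p with
  | nil => exact absurd rfl hw.symm
  | cons h q => exact ⟨_, h⟩

lemma aux_exists_leaf {V : Type*} [Fintype V] (T : SimpleGraph V) [DecidableRel T.Adj]
    (htree : T.IsTree) (hn : 2 ≤ Fintype.card V) : ∃ u, T.degree u = 1 := by
  by_contra h
  push_neg at h
  have hdeg : ∀ v, 2 ≤ T.degree v := by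
    intro v
    have h1 : 0 < T.degree v := by
      rw [T.degree_pos_iff_exists_adj v]
      exact aux_exists_adj T htree.isConnected hn v
    have h2 := h v
    omega
  have hsum : ∑ v, T.degree v = 2 * T.edgeFinset.card :=
    T.sum_degrees_eq_twice_card_edges
  have hcard := htree.card_edgeFinset
  have : 2 * Fintype.card V ≤ ∑ v, T.degree v := by
    calc 2 * Fintype.card V = ∑ _v : V, 2 := by simp [mul_comm]
    _ ≤ ∑ v, T.degree v := Finset.sum_le_sum fun v _ => hdeg v
  omega

lemma aux_unique_nbr {V : Type*} [Fintype V] (T : SimpleGraph V) [DecidableRel T.Adj]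
    {u v w : V} (hd : T.degree u = 1) (h1 : T.Adj u v) (h2 : T.Adj u w) : v = w := by
  have hv : v ∈ T.neighborFinset u := by rwa [T.mem_neighborFinset]
  have hw : w ∈ T.neighborFinset u := by rwa [T.mem_neighborFinset]
  have : (T.neighborFinset u).card = 1 := hd
  obtain ⟨a, ha⟩ := Finset.card_eq_one.mp this
  rw [ha, Finset.mem_singleton] at hv hw
  rw [hv, hw]

/-- For any tree `T` of order `n ≥ 3` with `s` support vertices, `χ_d^t(T) ≥ s + 1`.
A support vertex is a vertex of degree more than one adjacent to a leaf (vertex of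
degree one). -/
theorem stmt16 {V : Type*} [Fintype V] (T : SimpleGraph V) [DecidableRel T.Adj]
    (htree : T.IsTree) (hn : 3 ≤ Fintype.card V) :
    {v : V | 1 < T.degree v ∧ ∃ u : V, T.Adj v u ∧ T.degree u = 1}.ncard + 1 ≤
      tdChromNum T := by
  classical
  set S : Set V := {v | 1 < T.degree v ∧ ∃ u, T.Adj v u ∧ T.degree u = 1} with hS
  have hmem : Fintype.card V ∈ {n : ℕ | ∃ f : V → Fin n, IsTDColoring T f} := by
    refine ⟨Fintype.equivFin V, fun u v h hf => (T.ne_of_adj h) ((Fintype.equivFin V).injective hf), ?_⟩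
    intro v
    obtain ⟨u, hu⟩ := aux_exists_adj T htree.isConnected (by omega) v
    refine ⟨Fintype.equivFin V u, ⟨u, rfl⟩, ?_⟩
    intro w hw
    have : w = u := (Fintype.equivFin V).injective hw
    rw [this]; exact hu
  refine le_csInf ⟨_, hmem⟩ ?_
  rintro n ⟨f, hprop, hdom⟩
  have key : ∀ v ∈ S, ∀ u, f u = f v → u = v := by
    intro v hv
    obtain ⟨hdegv, u, huv, hdu⟩ := hv
    obtain ⟨i, ⟨w, hw⟩, hi⟩ := hdom u
    have hwv : w = v := aux_unique_nbr T hdu (hi w hw) huv.symm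
    have hfv : f v = i := hwv ▸ hw
    intro x hx
    exact aux_unique_nbr T hdu (hi x (hx.trans hfv)) huv.symm
  obtain ⟨u₀, hu₀⟩ := aux_exists_leaf T htree (by omega)
  have hnpos : 0 < n := (f u₀).pos
  have hne : ∀ v ∈ S, f v ≠ f u₀ := by
    intro v hv heq
    have h' := key v hv u₀ heq.symm
    obtain ⟨hdv, _⟩ := hv
    rw [← h'] at hdv
    omega
  have hinj : Set.InjOn f S := fun a ha b hb hab => key b hb a hab
  have h1 : S.ncard = (f '' S).ncard := (Set.ncard_image_of_injOn hinj).symm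
  have h2 : (f '' S) ⊆ {i : Fin n | i ≠ f u₀} := by
    rintro _ ⟨v, hv, rfl⟩; exact hne v hv
  have h3 : (f '' S).ncard ≤ ({i : Fin n | i ≠ f u₀}).ncard :=
    Set.ncard_le_ncard h2 (Set.toFinite _)
  have h4 : ({i : Fin n | i ≠ f u₀}).ncard = n - 1 := by
    have he : {i : Fin n | i ≠ f u₀} = ({f u₀} : Set (Fin n))ᶜ := by ext; simp
    rw [he]
    have := Set.ncard_add_ncard_compl ({f u₀} : Set (Fin n))
    rw [Set.ncard_singleton] at this
    simp only [Nat.card_eq_fintype_card, Fintype.card_fin] at this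
    omega
  omega
end

section
/- Let T be a tree of order n ≥ 3 in which every vertex is a leaf or a support vertex, and let s be the number of support vertices of T. Then χ_d^t(T) = s + 1. -/
open SimpleGraph

lemma closed_walk {V : Type*} {T : SimpleGraph V} {A : Set V}
    (hA : ∀ x ∈ A, ∀ y, T.Adj x y → y ∈ A) :
    ∀ {u w : V}, u ∈ A → T.Walk u w → w ∈ A := by
  intro u w hu p
  induction p with
  | nil => exact hu
  | cons h p ih => exact ih (hA _ hu _ h)

lemma uniq_nbr {V : Type*} [Fintype V] {T : SimpleGraph V} [DecidableRel T.Adj]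
    {u a b : V} (h : T.degree u = 1) (ha : T.Adj u a) (hb : T.Adj u b) : a = b :=
  Finset.card_le_one.mp h.le a (T.mem_neighborFinset u a |>.mpr ha)
    b (T.mem_neighborFinset u b |>.mpr hb)

lemma no_adj_leaves {V : Type*} [Fintype V] {T : SimpleGraph V} [DecidableRel T.Adj]
    (hconn : T.Connected) (hn : 3 ≤ Fintype.card V) {u w : V}
    (hadj : T.Adj u w) (hu : T.degree u = 1) (hw : T.degree w = 1) : False := by
  classical
  have hsub : ∀ x : V, x ∈ ({u, w} : Set V) := by
    intro x
    refine closed_walk (A := ({u, w} : Set V)) ?_ (by left; rfl)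
      ((hconn.preconnected u x).some)
    rintro a (rfl | rfl) y hy
    · right; exact (uniq_nbr hu hy hadj) ▸ rfl
    · left; exact (uniq_nbr hw hy hadj.symm) ▸ rfl
  have hle : (Finset.univ : Finset V) ⊆ {u, w} := fun x _ => by
    have h := hsub x
    simp only [Set.mem_insert_iff, Set.mem_singleton_iff] at h
    simpa using h
  have h2 := Finset.card_le_card hle
  have h3 : ({u, w} : Finset V).card ≤ 2 := by
    refine le_trans (Finset.card_insert_le _ _) ?_; simp
  simp [Finset.card_univ] at h2
  omega

/-- If `T` is a tree of order `n ≥ 3` in which every vertex is a leaf or a support vertex,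
then `χ_d^t(T) = s + 1` where `s` is the number of support vertices. -/
theorem stmt17 {V : Type*} [Fintype V] (T : SimpleGraph V) [DecidableRel T.Adj]
    (htree : T.IsTree) (hn : 3 ≤ Fintype.card V)
    (hall : ∀ v : V, T.degree v = 1 ∨
      (1 < T.degree v ∧ ∃ u : V, T.Adj v u ∧ T.degree u = 1)) :
    tdChromNum T =
      {v : V | 1 < T.degree v ∧ ∃ u : V, T.Adj v u ∧ T.degree u = 1}.ncard + 1 := by
  classical
  have hconn := htree.isConnected
  set Sset : Set V := {v : V | 1 < T.degree v ∧ ∃ u : V, T.Adj v u ∧ T.degree u = 1}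
    with hSset
  have hfin : Sset.Finite := Set.toFinite _
  set S : Finset V := hfin.toFinset with hS
  have hmemS : ∀ x, x ∈ S ↔ x ∈ Sset := fun x => hfin.mem_toFinset
  have hcard : Sset.ncard = S.card := Set.ncard_eq_toFinset_card Sset hfin
  -- a vertex adjacent to a leaf is a support vertex
  have hleafsup : ∀ {v u : V}, T.Adj v u → T.degree u = 1 → v ∈ S := by
    intro v u hvu hu
    rcases hall v with h1 | h2
    · exact (no_adj_leaves hconn hn hvu h1 hu).elim
    · exact (hmemS v).mpr h2
  -- there is a leaf
  have hne : Nonempty V := Fintype.card_pos_iff.mp (by omega)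
  obtain ⟨u₀, hu₀⟩ : ∃ u : V, T.degree u = 1 := by
    obtain ⟨v₀⟩ := hne
    rcases hall v₀ with h | ⟨_, u, _, hu⟩
    · exact ⟨v₀, h⟩
    · exact ⟨u, hu⟩
  -- the coloring witnessing the upper bound
  let f : V → Fin (S.card + 1) := fun v =>
    if h : v ∈ S then (S.equivFin ⟨v, h⟩).succ else 0
  have hfS : ∀ {v} (h : v ∈ S), f v = (S.equivFin ⟨v, h⟩).succ := by
    intro v h; simp [f, h]
  have hfnS : ∀ {v}, v ∉ S → f v = 0 := by
    intro v h; simp [f, h]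
  have hclass : ∀ w (hw : w ∈ S), ∀ x, f x = f w → x = w := by
    intro w hw x hx
    by_cases hxS : x ∈ S
    · rw [hfS hxS, hfS hw] at hx
      have h2 := S.equivFin.injective (Fin.succ_injective _ hx)
      exact congrArg Subtype.val h2
    · rw [hfnS hxS, hfS hw] at hx
      exact absurd hx.symm (Fin.succ_ne_zero _)
  have hTD : IsTDColoring T f := by
    constructor
    · -- proper
      intro u v huv h
      by_cases huS : u ∈ S
      · exact huv.ne (hclass u huS v h.symm).symm
      · by_cases hvS : v ∈ S
        · exact absurd ((hfnS huS) ▸ h ▸ hfS hvS) (Fin.succ_ne_zero _).symm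
        · have hu1 : T.degree u = 1 := by
            rcases hall u with h1 | h2
            · exact h1
            · exact absurd ((hmemS u).mpr h2) huS
          have hv1 : T.degree v = 1 := by
            rcases hall v with h1 | h2
            · exact h1
            · exact absurd ((hmemS v).mpr h2) hvS
          exact no_adj_leaves hconn hn huv hu1 hv1
    · -- total domination
      intro v
      by_cases hnb : ∃ w ∈ S, T.Adj v w
      · obtain ⟨w, hwS, hvw⟩ := hnb
        exact ⟨f w, ⟨w, rfl⟩, fun u hu => (hclass w hwS u hu) ▸ hvw⟩
      · push_neg at hnb
        -- v cannot be a leaf: its neighbor would be a support vertex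
        have hvS : v ∈ S := by
          rcases hall v with h1 | h2
          · obtain ⟨w, hw⟩ : ∃ w, T.Adj v w := by
              have : 0 < T.degree v := by omega
              obtain ⟨w, hw⟩ := Finset.card_pos.mp this
              exact ⟨w, (T.mem_neighborFinset v w).mp hw⟩
            exact absurd (hw) (hnb w (hleafsup hw.symm h1))
          · exact (hmemS v).mpr h2
        -- all neighbors of v are leaves, so T is a star centered at v
        have hstar : ∀ x, x = v ∨ T.Adj v x := by
          intro x
          have := closed_walk (A := ({v} ∪ {y | T.Adj v y} : Set V)) ?_
            (Or.inl rfl) ((hconn.preconnected v x).some)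
          · simpa using this
          · rintro a (rfl | ha) y hy
            · exact Or.inr hy
            · left
              have ha1 : T.degree a = 1 := by
                rcases hall a with h1 | h2
                · exact h1
                · exact absurd ha (hnb a ((hmemS a).mpr h2))
              exact uniq_nbr ha1 hy ha.symm
        obtain ⟨hdeg, u, hvu, hu1⟩ := (hmemS v).mp hvS
        refine ⟨0, ⟨u, hfnS fun hc => by have := ((hmemS u).mp hc).1; omega⟩, ?_⟩
        intro x hx
        have hxS : x ∉ S := fun hc => absurd ((hfS hc).symm.trans hx) (Fin.succ_ne_zero _)
        rcases hstar x with rfl | h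
        · exact absurd hvS hxS
        · exact h
  refine le_antisymm ?_ ?_
  · rw [hcard]
    exact Nat.sInf_le ⟨f, hTD⟩
  · -- lower bound
    rw [hcard]
    refine le_csInf ⟨_, f, hTD⟩ ?_
    rintro m ⟨g, hgprop, hgtd⟩
    have key : ∀ v ∈ S, ∀ x, g x = g v → x = v := by
      intro v hv
      obtain ⟨hdeg, u, hvu, hu1⟩ := (hmemS v).mp hv
      obtain ⟨i, ⟨x0, hx0⟩, hdom⟩ := hgtd u
      have hx : ∀ x, g x = i → x = v := fun x hx => uniq_nbr hu1 (hdom x hx) hvu.symm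
      have hgv : g v = i := hx x0 hx0 ▸ hx0
      intro x hxx
      exact hx x (hxx.trans hgv)
    have hinj : Set.InjOn g S := by
      intro x hx y hy hxy
      exact key y hy x hxy
    have hnot : g u₀ ∉ S.image g := by
      rintro hmem
      obtain ⟨w, hwS, hw⟩ := Finset.mem_image.mp hmem
      have := key w hwS u₀ hw.symm
      obtain ⟨hdeg, _⟩ := (hmemS w).mp hwS
      rw [this] at hu₀
      omega
    have h1 : (insert (g u₀) (S.image g)).card = S.card + 1 := by
      rw [Finset.card_insert_of_notMem hnot, Finset.card_image_of_injOn hinj]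
    calc S.card + 1 = (insert (g u₀) (S.image g)).card := h1.symm
      _ ≤ Fintype.card (Fin m) := Finset.card_le_univ _
      _ = m := Fintype.card_fin m
end

section
/- Let T be a tree of order n ≥ 3 with diameter at most 3, and let s be the number of support vertices of T. Then χ_d^t(T) = s + 1. -/
open SimpleGraph

section Helpers

variable {V : Type*} {T : SimpleGraph V}

lemma path_len [DecidableEq V] (hA : T.IsAcyclic) (hc : T.Connected) {u v : V}
    (p : T.Walk u v) (hp : p.IsPath) : p.length = T.dist u v := by
  obtain ⟨w, hw⟩ := hc.exists_walk_length_eq_dist u v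
  have h1 : w.bypass.length = T.dist u v :=
    le_antisymm (hw ▸ w.length_bypass_le) (dist_le _)
  have h2 : (⟨p, hp⟩ : T.Path u v) = ⟨w.bypass, w.bypass_isPath⟩ :=
    hA.path_unique _ _
  have h3 : p = w.bypass := congrArg Subtype.val h2
  rw [h3, h1]

lemma mid2 {u v : V} (h : T.dist u v = 2) : ∃ x, T.Adj u x ∧ T.Adj x v := by
  obtain ⟨w, hw⟩ := exists_walk_of_dist_ne_zero (G := T) (u := u) (v := v) (by omega)
  rw [h] at hw
  cases w with
  | nil => simp at hw
  | cons h1 w1 =>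
    cases w1 with
    | nil => simp at hw
    | cons h2 w2 =>
      cases w2 with
      | nil => exact ⟨_, h1, h2⟩
      | cons h3 w3 => simp [SimpleGraph.Walk.length_cons] at hw

lemma mid3 {u v : V} (h : T.dist u v = 3) :
    ∃ x y, T.Adj u x ∧ T.Adj x y ∧ T.Adj y v := by
  obtain ⟨w, hw⟩ := exists_walk_of_dist_ne_zero (G := T) (u := u) (v := v) (by omega)
  rw [h] at hw
  cases w with
  | nil => simp at hw
  | cons h1 w1 =>
    cases w1 with
    | nil => simp at hw
    | cons h2 w2 =>
      cases w2 with
      | nil => simp at hw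
      | cons h3 w3 =>
        cases w3 with
        | nil => exact ⟨_, _, h1, h2, h3⟩
        | cons h4 w4 => simp [SimpleGraph.Walk.length_cons] at hw

lemma two_nbrs [Fintype V] [DecidableRel T.Adj] {u x y : V}
    (h1 : T.Adj u x) (h2 : T.Adj u y) (hxy : x ≠ y) : 1 < T.degree u :=
  Finset.one_lt_card.mpr
    ⟨x, (T.mem_neighborFinset u x).mpr h1, y, (T.mem_neighborFinset u y).mpr h2, hxy⟩

variable [DecidableEq V]

/-- the (2,3) case of the claim about double stars -/
lemma case23 (hA : T.IsAcyclic) (hc : T.Connected)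
    (hdiam : ∀ u v : V, T.dist u v ≤ 3) {a b v : V} (hab : T.Adj a b)
    (hb : ∃ x, T.Adj b x ∧ x ≠ a)
    (h2 : T.dist v a = 2) (h3 : T.dist v b = 3)
    (hna : ¬ T.Adj v a) (hnb : ¬ T.Adj v b)
    (hva : v ≠ a) (hvb : v ≠ b) : False := by
  obtain ⟨x, hvx, hxa⟩ := mid2 h2
  obtain ⟨b', hbb', hb'a⟩ := hb
  have hxb : x ≠ b := fun h => hnb (h ▸ hvx)
  have hb'x : b' ≠ x := by
    intro h
    subst h
    have hp1 : (Walk.cons hxa (Walk.cons hab Walk.nil) : T.Walk b' b).IsPath := by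
      simp [Walk.isPath_def, hxa.ne, hab.ne]
      exact hxb
    have hp2 : (Walk.cons hbb'.symm Walk.nil : T.Walk b' b).IsPath := by
      simp [Walk.isPath_def, hxb]
    have e1 := path_len hA hc _ hp1
    have e2 := path_len hA hc _ hp2
    simp at e1 e2
    omega
  have hb'v : b' ≠ v := fun h => hnb (h ▸ hbb').symm
  have hp : (Walk.cons hvx (Walk.cons hxa (Walk.cons hab (Walk.cons hbb' Walk.nil))) :
      T.Walk v b').IsPath := by
    simp [Walk.isPath_def, hvx.ne, hxa.ne, hab.ne, hbb'.ne, hva, hvb, hb'v.symm, hxb,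
      hb'x.symm, hb'a.symm]
  have := path_len hA hc _ hp
  simp at this
  have := hdiam v b'
  omega

lemma case22 (hA : T.IsAcyclic) (hc : T.Connected) {a b v : V} (hab : T.Adj a b)
    (h2 : T.dist v a = 2) (h2' : T.dist v b = 2)
    (hnb : ¬ T.Adj v b) (hva : v ≠ a) (hvb : v ≠ b) : False := by
  obtain ⟨x, hvx, hxa⟩ := mid2 h2
  have hxb : x ≠ b := fun h => hnb (h ▸ hvx)
  have hp : (Walk.cons hvx (Walk.cons hxa (Walk.cons hab Walk.nil)) : T.Walk v b).IsPath := by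
    simp [Walk.isPath_def, hvx.ne, hxa.ne, hab.ne, hva, hvb, hxb]
  have := path_len hA hc _ hp
  simp at this
  omega

lemma case33 (hA : T.IsAcyclic) (hc : T.Connected) {a b v : V} (hab : T.Adj a b)
    (h3 : T.dist v a = 3) (h3' : T.dist v b = 3)
    (hna : ¬ T.Adj v a) (hnb : ¬ T.Adj v b) (hva : v ≠ a) (hvb : v ≠ b) : False := by
  obtain ⟨x, y, hvx, hxy, hya⟩ := mid3 h3
  have hvy : v ≠ y := fun h => hna (h ▸ hya)
  have hxa : x ≠ a := fun h => hna (h ▸ hvx)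
  have hxb : x ≠ b := fun h => hnb (h ▸ hvx)
  have hyb : y ≠ b := by
    intro h
    subst h
    have := dist_le (Walk.cons hvx (Walk.cons hxy Walk.nil) : T.Walk v y)
    simp at this
    omega
  have hp : (Walk.cons hvx (Walk.cons hxy (Walk.cons hya (Walk.cons hab Walk.nil))) :
      T.Walk v b).IsPath := by
    simp [Walk.isPath_def, hvx.ne, hxy.ne, hya.ne, hab.ne, hva, hvb, hvy, hxa, hxb, hyb]
  have := path_len hA hc _ hp
  simp at this
  omega

lemma claimB (hA : T.IsAcyclic) (hc : T.Connected)
    (hdiam : ∀ u v : V, T.dist u v ≤ 3) {a b : V} (hab : T.Adj a b)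
    (ha : ∃ x, T.Adj a x ∧ x ≠ b) (hb : ∃ x, T.Adj b x ∧ x ≠ a) :
    ∀ v, v ≠ a → v ≠ b → T.Adj v a ∨ T.Adj v b := by
  intro v hva hvb
  by_contra hcon
  push_neg at hcon
  obtain ⟨hna, hnb⟩ := hcon
  have hda3 := hdiam v a
  have hdb3 := hdiam v b
  have hda0 : T.dist v a ≠ 0 := fun h => hva (hc.dist_eq_zero_iff.mp h)
  have hdb0 : T.dist v b ≠ 0 := fun h => hvb (hc.dist_eq_zero_iff.mp h)
  have hda1 : T.dist v a ≠ 1 := fun h => hna (dist_eq_one_iff_adj.mp h)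
  have hdb1 : T.dist v b ≠ 1 := fun h => hnb (dist_eq_one_iff_adj.mp h)
  have hda : T.dist v a = 2 ∨ T.dist v a = 3 := by omega
  have hdb : T.dist v b = 2 ∨ T.dist v b = 3 := by omega
  rcases hda with hda | hda <;> rcases hdb with hdb | hdb
  · exact case22 hA hc hab hda hdb hnb hva hvb
  · exact case23 hA hc hdiam hab hb hda hdb hna hnb hva hvb
  · exact case23 hA hc hdiam hab.symm ha hdb hda hnb hna hvb hva
  · exact case33 hA hc hab hda hdb hna hnb hva hvb

lemma onlyNbr (hA : T.IsAcyclic) (hc : T.Connected) {a b v : V} (hab : T.Adj a b)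
    (hclaim : ∀ u, u ≠ a → u ≠ b → T.Adj u a ∨ T.Adj u b)
    (hva : T.Adj v a) (hvb : v ≠ b) : ∀ w, T.Adj v w → w = a := by
  intro w hvw
  by_contra hwa
  by_cases hwb : w = b
  · subst hwb
    have hp : (Walk.cons hva (Walk.cons hab Walk.nil) : T.Walk v w).IsPath := by
      simp [Walk.isPath_def, hva.ne, hab.ne, hvb]
    have e1 := path_len hA hc _ hp
    have e2 := path_len hA hc (Walk.cons hvw Walk.nil) (by simp [Walk.isPath_def, hvw.ne])
    simp at e1 e2
    omega
  · rcases hclaim w hwa hwb with hw | hw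
    · have hp : (Walk.cons hvw.symm (Walk.cons hva Walk.nil) : T.Walk w a).IsPath := by
        simp [Walk.isPath_def, hvw.ne', hva.ne, hwa]
      have e1 := path_len hA hc _ hp
      have e2 := path_len hA hc (Walk.cons hw Walk.nil) (by simp [Walk.isPath_def, hw.ne])
      simp at e1 e2
      omega
    · have hp1 : (Walk.cons hva (Walk.cons hab Walk.nil) : T.Walk v b).IsPath := by
        simp [Walk.isPath_def, hva.ne, hab.ne, hvb]
      have hp2 : (Walk.cons hvw (Walk.cons hw Walk.nil) : T.Walk v b).IsPath := by
        simp [Walk.isPath_def, hvw.ne, hw.ne, hvb]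
      have heq : (⟨_, hp1⟩ : T.Path v b) = ⟨_, hp2⟩ := hA.path_unique _ _
      have := congrArg (fun p : T.Path v b => (p : T.Walk v b).support) heq
      simp [Walk.support_cons] at this
      exact hwa this.symm

lemma deg_one_of_only [Fintype V] [DecidableRel T.Adj] {v a : V} (h : T.Adj v a)
    (honly : ∀ w, T.Adj v w → w = a) : T.degree v = 1 := by
  have : T.neighborFinset v = {a} := by
    ext w
    simp only [mem_neighborFinset, Finset.mem_singleton]
    exact ⟨honly w, fun hw => hw ▸ h⟩
  rw [degree, this, Finset.card_singleton]


lemma claimA [Fintype V] [DecidableRel T.Adj] (hA : T.IsAcyclic) (hc : T.Connected)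
    (hdiam : ∀ u v : V, T.dist u v ≤ 3) {c : V}
    (hstar : ∀ x, T.Adj c x → T.degree x = 1) :
    ∀ v, v ≠ c → T.Adj v c := by
  intro v hv
  have hd3 := hdiam v c
  have hd0 : T.dist v c ≠ 0 := fun h => hv (hc.dist_eq_zero_iff.mp h)
  by_cases hd1 : T.dist v c = 1
  · exact dist_eq_one_iff_adj.mp hd1
  have hd : T.dist v c = 2 ∨ T.dist v c = 3 := by omega
  exfalso
  rcases hd with hd | hd
  · obtain ⟨x, hvx, hxc⟩ := mid2 hd
    have h1 := hstar x hxc.symm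
    have h2 := two_nbrs hvx.symm hxc hv
    omega
  · obtain ⟨x, y, hvx, hxy, hyc⟩ := mid3 hd
    have hxc : x ≠ c := by
      intro h
      subst h
      have := dist_le (Walk.cons hvx Walk.nil : T.Walk v x)
      simp at this
      omega
    have h1 := hstar y hyc.symm
    have h2 := two_nbrs hxy.symm hyc hxc
    omega

lemma starLeaf [Fintype V] [DecidableRel T.Adj] (hA : T.IsAcyclic) (hc : T.Connected)
    (hdiam : ∀ u v : V, T.dist u v ≤ 3) {c : V}
    (hstar : ∀ x, T.Adj c x → T.degree x = 1) :
    ∀ v, v ≠ c → ∀ w, T.Adj v w → w = c := by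
  intro v hv w hvw
  by_contra hwc
  have h1 := hstar w ((claimA hA hc hdiam hstar w hwc).symm)
  have h2 := two_nbrs hvw.symm (claimA hA hc hdiam hstar w hwc) hv
  omega

lemma deg_of_dist [Fintype V] [DecidableRel T.Adj] (hc : T.Connected) {u v : V}
    (h2 : 2 ≤ T.dist u v) (h3 : T.dist u v ≤ 3) : ∃ c, 1 < T.degree c := by
  have huv : u ≠ v := by
    intro h
    subst h
    rw [SimpleGraph.dist_self] at h2
    omega
  have hd : T.dist u v = 2 ∨ T.dist u v = 3 := by omega
  rcases hd with hd | hd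
  · obtain ⟨x, hux, hxv⟩ := mid2 hd
    exact ⟨x, two_nbrs hux.symm hxv huv⟩
  · obtain ⟨x, y, hux, hxy, hyv⟩ := mid3 hd
    have huy : u ≠ y := by
      intro h
      subst h
      have := dist_le (Walk.cons hyv Walk.nil : T.Walk u v)
      simp at this
      omega
    exact ⟨x, two_nbrs hux.symm hxy huy⟩

lemma exists_deg2 [Fintype V] [DecidableRel T.Adj] (hA : T.IsAcyclic) (hc : T.Connected)
    (hdiam : ∀ u v : V, T.dist u v ≤ 3) (hn : 3 ≤ Fintype.card V) :
    ∃ c, 1 < T.degree c := by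
  have hne : Nonempty V := Fintype.card_pos_iff.mp (by omega)
  obtain ⟨x⟩ := hne
  obtain ⟨y, hyx⟩ := Fintype.exists_ne_of_one_lt_card (by omega) x
  have hz : ∃ z, z ≠ x ∧ z ≠ y := by
    by_contra hcon
    push_neg at hcon
    have hsub : (Finset.univ : Finset V) ⊆ {x, y} := by
      intro z _
      rcases eq_or_ne z x with h | h
      · simp [h]
      · simp [hcon z h]
    have := Finset.card_le_card hsub
    have h2 : ({x, y} : Finset V).card ≤ 2 :=
      le_trans (Finset.card_insert_le _ _) (by simp)
    rw [Finset.card_univ] at this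
    omega
  obtain ⟨z, hzx, hzy⟩ := hz
  by_cases hxy2 : 2 ≤ T.dist x y
  · exact deg_of_dist hc hxy2 (hdiam x y)
  by_cases hxz2 : 2 ≤ T.dist x z
  · exact deg_of_dist hc hxz2 (hdiam x z)
  by_cases hyz2 : 2 ≤ T.dist y z
  · exact deg_of_dist hc hyz2 (hdiam y z)
  exfalso
  have d1 : T.dist x y = 1 := by
    have h0 : T.dist x y ≠ 0 := fun h => hyx (hc.dist_eq_zero_iff.mp h).symm
    omega
  have d2 : T.dist x z = 1 := by
    have h0 : T.dist x z ≠ 0 := fun h => hzx (hc.dist_eq_zero_iff.mp h).symm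
    omega
  have d3 : T.dist y z = 1 := by
    have h0 : T.dist y z ≠ 0 := fun h => hzy (hc.dist_eq_zero_iff.mp h).symm
    omega
  have hxy := dist_eq_one_iff_adj.mp d1
  have hxz := dist_eq_one_iff_adj.mp d2
  have hyz := dist_eq_one_iff_adj.mp d3
  have hp : (Walk.cons hxy (Walk.cons hyz Walk.nil) : T.Walk x z).IsPath := by
    simp [Walk.isPath_def, hxy.ne, hyz.ne, hzx.symm]
  have := path_len hA hc _ hp
  simp at this
  omega

lemma lb2 {e1 e2 : V} (he : T.Adj e1 e2) :
    ∀ m ∈ {n : ℕ | ∃ f : V → Fin n, IsTDColoring T f}, 2 ≤ m := by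
  rintro m ⟨f, hprop, -⟩
  have hne := hprop e1 e2 he
  have h1 := (f e1).isLt
  have h2 := (f e2).isLt
  have : (f e1).val ≠ (f e2).val := fun h => hne (Fin.val_injective h)
  omega

lemma lb3 {a b la lb : V} (hab : T.Adj a b)
    (honla : ∀ w, T.Adj la w → w = a) (hlaa : la ≠ a) (hlab : la ≠ b)
    (honlb : ∀ w, T.Adj lb w → w = b) :
    ∀ m ∈ {n : ℕ | ∃ f : V → Fin n, IsTDColoring T f}, 3 ≤ m := by
  rintro m ⟨f, hprop, hdom⟩
  obtain ⟨i, ⟨u0, hu0⟩, hi⟩ := hdom la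
  have hia : ∀ u, f u = i → u = a := fun u hu => honla u (hi u hu)
  have hfa : f a = i := (hia u0 hu0) ▸ hu0
  obtain ⟨j, ⟨w0, hw0⟩, hj⟩ := hdom lb
  have hjb : ∀ u, f u = j → u = b := fun u hu => honlb u (hj u hu)
  have hfb : f b = j := (hjb w0 hw0) ▸ hw0
  have hij : i ≠ j := fun h => hab.ne (hjb a (h ▸ hfa))
  have h1 : f la ≠ i := fun h => hlaa (hia la h)
  have h2 : f la ≠ j := fun h => hlab (hjb la h)
  have hi1 := i.isLt
  have hj1 := j.isLt
  have hl1 := (f la).isLt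
  have e1 : i.val ≠ j.val := fun h => hij (Fin.val_injective h)
  have e2 : (f la).val ≠ i.val := fun h => h1 (Fin.val_injective h)
  have e3 : (f la).val ≠ j.val := fun h => h2 (Fin.val_injective h)
  omega

end Helpers

/-- If `T` is a tree of order `n ≥ 3` with diameter at most 3, then `χ_d^t(T) = s + 1`
where `s` is the number of support vertices. -/
theorem stmt18 {V : Type*} [Fintype V] (T : SimpleGraph V) [DecidableRel T.Adj]
    (htree : T.IsTree) (hn : 3 ≤ Fintype.card V)
    (hdiam : ∀ u v : V, T.dist u v ≤ 3) :
    tdChromNum T =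
      {v : V | 1 < T.degree v ∧ ∃ u : V, T.Adj v u ∧ T.degree u = 1}.ncard + 1 := by
  classical
  have hA := htree.IsAcyclic
  have hc := htree.isConnected
  by_cases hcase : ∃ a b, T.Adj a b ∧ 2 ≤ T.degree a ∧ 2 ≤ T.degree b
  · -- double star case
    obtain ⟨a, b, hab, hda, hdb⟩ := hcase
    obtain ⟨a', ha'mem, ha'b⟩ :=
      Finset.exists_mem_ne (s := T.neighborFinset a)
        (by rw [T.card_neighborFinset_eq_degree]; omega) b
    obtain ⟨b', hb'mem, hb'a⟩ :=
      Finset.exists_mem_ne (s := T.neighborFinset b)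
        (by rw [T.card_neighborFinset_eq_degree]; omega) a
    have haa' : T.Adj a a' := (T.mem_neighborFinset a a').mp ha'mem
    have hbb' : T.Adj b b' := (T.mem_neighborFinset b b').mp hb'mem
    have hclaim := claimB hA hc hdiam hab ⟨a', haa', ha'b⟩ ⟨b', hbb', hb'a⟩
    have hclaim' : ∀ u, u ≠ b → u ≠ a → T.Adj u b ∨ T.Adj u a :=
      fun u h1 h2 => (hclaim u h2 h1).symm
    have honlyA : ∀ v, T.Adj v a → v ≠ b → ∀ w, T.Adj v w → w = a :=
      fun v hva hvb => onlyNbr hA hc hab hclaim hva hvb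
    have honlyB : ∀ v, T.Adj v b → v ≠ a → ∀ w, T.Adj v w → w = b :=
      fun v hvb hva => onlyNbr hA hc hab.symm hclaim' hvb hva
    have hleaf : ∀ v, v ≠ a → v ≠ b → T.degree v = 1 := by
      intro v hva hvb
      rcases hclaim v hva hvb with h | h
      · exact deg_one_of_only h (honlyA v h hvb)
      · exact deg_one_of_only h (honlyB v h hva)
    have hset : {v : V | 1 < T.degree v ∧ ∃ u : V, T.Adj v u ∧ T.degree u = 1} =
        ({a, b} : Set V) := by
      ext v
      simp only [Set.mem_setOf_eq, Set.mem_insert_iff, Set.mem_singleton_iff]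
      constructor
      · rintro ⟨hdeg, -⟩
        by_contra hcon
        push_neg at hcon
        have := hleaf v hcon.1 hcon.2
        omega
      · rintro (h | h)
        · exact h ▸ ⟨by omega, ⟨a', haa', hleaf a' haa'.ne' ha'b⟩⟩
        · exact h ▸ ⟨by omega, ⟨b', hbb', hleaf b' hb'a hbb'.ne'⟩⟩
    rw [hset, Set.ncard_pair hab.ne]
    have hmem : 3 ∈ {n : ℕ | ∃ f : V → Fin n, IsTDColoring T f} := by
      refine ⟨fun v => if v = a then 0 else if v = b then 1 else 2, ?_, ?_⟩
      · intro u v huv heq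
        have hne := hab.ne
        by_cases hua : u = a
        · by_cases hvb : v = b
          · simp [hua, hvb, Ne.symm hne] at heq
          · by_cases hva : v = a
            · exact huv.ne (hua.trans hva.symm)
            · simp [hua, hva, hvb] at heq
        · by_cases hub : u = b
          · by_cases hva : v = a
            · simp [hub, hva, Ne.symm hne] at heq
            · by_cases hvb : v = b
              · exact huv.ne (hub.trans hvb.symm)
              · simp [hub, hva, hvb, Ne.symm hne] at heq
          · rcases hclaim u hua hub with h | h
            · have hva := honlyA u h hub v huv
              simp [hua, hub, hva] at heq
            · have hvb := honlyB u h hua v huv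
              simp [hua, hub, hvb, Ne.symm hne] at heq
      · intro v
        by_cases hva : v = a
        · refine ⟨1, ⟨b, by simp [hab.ne']⟩, ?_⟩
          intro u hu
          rw [hva]
          by_cases h1 : u = a
          · simp [h1] at hu
          · by_cases h2 : u = b
            · exact h2 ▸ hab
            · simp [h1, h2] at hu
        · by_cases hvb : v = b
          · refine ⟨0, ⟨a, by simp⟩, ?_⟩
            intro u hu
            rw [hvb]
            by_cases h1 : u = a
            · exact h1 ▸ hab.symm
            · by_cases h2 : u = b <;> simp [h1, h2, hab.ne'] at hu
          · rcases hclaim v hva hvb with h | h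
            · refine ⟨0, ⟨a, by simp⟩, ?_⟩
              intro u hu
              by_cases h1 : u = a
              · exact h1 ▸ h
              · by_cases h2 : u = b <;> simp [h1, h2, hab.ne'] at hu
            · refine ⟨1, ⟨b, by simp [hab.ne']⟩, ?_⟩
              intro u hu
              by_cases h1 : u = a
              · simp [h1] at hu
              · by_cases h2 : u = b
                · exact h2 ▸ h
                · simp [h1, h2] at hu
    have hlb := lb3 (T := T) hab (honlyA a' haa'.symm ha'b) haa'.ne' ha'b
      (honlyB b' hbb'.symm hb'a)
    exact le_antisymm (Nat.sInf_le hmem) (le_csInf ⟨3, hmem⟩ hlb)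
  · -- star case
    push_neg at hcase
    obtain ⟨c, hc2⟩ := exists_deg2 hA hc hdiam hn
    have hstar : ∀ x, T.Adj c x → T.degree x = 1 := by
      intro x hx
      have h1 := hcase c x hx (by omega)
      have h2 : 0 < T.degree x := (T.degree_pos_iff_exists_adj x).mpr ⟨c, hx.symm⟩
      omega
    have hcl := claimA hA hc hdiam hstar
    have hleafs := starLeaf hA hc hdiam hstar
    have hset : {v : V | 1 < T.degree v ∧ ∃ u : V, T.Adj v u ∧ T.degree u = 1} =
        ({c} : Set V) := by
      ext v
      simp only [Set.mem_setOf_eq, Set.mem_singleton_iff]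
      constructor
      · rintro ⟨hdeg, -⟩
        by_contra hvc
        have := deg_one_of_only (hcl v hvc) (hleafs v hvc)
        omega
      · rintro h
        refine h ▸ ⟨hc2, ?_⟩
        obtain ⟨u, hu⟩ := (T.degree_pos_iff_exists_adj c).mp (by omega)
        exact ⟨u, hu, hstar u hu⟩
    rw [hset, Set.ncard_singleton]
    have hmem : 2 ∈ {n : ℕ | ∃ f : V → Fin n, IsTDColoring T f} := by
      refine ⟨fun v => if v = c then 0 else 1, ?_, ?_⟩
      · intro u v huv heq
        by_cases hu : u = c
        · have hv : v ≠ c := by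
            rw [← hu]
            exact huv.ne'
          simp [hu, hv] at heq
        · by_cases hv : v = c
          · simp [hu, hv] at heq
          · exact hv (hleafs u hu v huv)
      · intro v
        by_cases hv : v = c
        · obtain ⟨w, hw⟩ := Fintype.exists_ne_of_one_lt_card (by omega) c
          refine ⟨1, ⟨w, by simp [hw]⟩, ?_⟩
          intro u hu
          have hu' : u ≠ c := by
            intro h
            simp [h] at hu
          rw [hv]
          exact (hcl u hu').symm
        · refine ⟨0, ⟨c, by simp⟩, ?_⟩
          intro u hu
          have huc : u = c := by
            by_contra h
            simp [h] at hu
          exact huc ▸ hcl v hv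
    obtain ⟨u, hu⟩ := (T.degree_pos_iff_exists_adj c).mp (by omega)
    exact le_antisymm (Nat.sInf_le hmem) (le_csInf ⟨2, hmem⟩ (lb2 hu))
end
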